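/- arXiv:2409.03903 — 6 statements merged into one kernel-verified Lean document; each statement's English description precedes it below -/
import Mathlib

section
/- Let q ≥ 2 and k ≥ 2 be integers and let I be a maximization instance of k CSP-q with n variables and opt(I) ≠ wor(I) that admits a strong coloring with ν colors, where ν ≥ k. Suppose there exists an orthogonal array OA(R, ν, q, k) with entries in Σ_q in which some word u ∈ Σ_q^ν occurs as a row exactly R* > 0 times. Then the average differential ratio of I is at least R*/R; equivalently, E[v(I,X)] ≥ (R*/R)·opt(I) + (1 − R*/R)·wor(I). -/
open Finset

section Aux

lemma sorted_factor {k ν : ℕ} (d : Fin k → Fin ν) (hd : Function.Injective d) :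
    ∃ (e : Fin k → Fin ν) (σ : Equiv.Perm (Fin k)), StrictMono e ∧ ∀ s, d s = e (σ s) := by
  classical
  set S : Finset (Fin ν) := Finset.image d Finset.univ with hS
  have hcard : S.card = k := by
    rw [hS, Finset.card_image_of_injective _ hd, Finset.card_univ, Fintype.card_fin]
  set e0 := S.orderIsoOfFin hcard with he0
  have hmem : ∀ s, d s ∈ S := fun s => Finset.mem_image_of_mem _ (Finset.mem_univ s)
  set φ : Fin k → Fin k := fun s => e0.symm ⟨d s, hmem s⟩ with hφ
  have hφd : ∀ s, (e0 (φ s) : Fin ν) = d s := by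
    intro s; rw [hφ]; simp
  have hφinj : Function.Injective φ := by
    intro a b hab
    apply hd
    rw [← hφd a, ← hφd b, hab]
  have hφbij : Function.Bijective φ := Finite.injective_iff_bijective.mp hφinj
  refine ⟨fun t => (e0 t : Fin ν), Equiv.ofBijective φ hφbij, ?_, ?_⟩
  · intro a b hab
    exact Subtype.coe_lt_coe.mpr (e0.strictMono hab)
  · intro s; exact (hφd s).symm

lemma countA {q k ν : ℕ} (hq : 0 < q) (hνk : k ≤ ν) {ρ : Type*} [Fintype ρ]
    (M : ρ → Fin ν → Fin q) (N : ℕ)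
    (hOA : ∀ c : Fin k → Fin ν, StrictMono c → ∀ v : Fin k → Fin q,
      (Finset.univ.filter fun r => ∀ s, M r (c s) = v s).card * q ^ k = N) :
    ∀ (t j : ℕ), j + t = k → ∀ d : Fin j → Fin ν, Function.Injective d →
      ∀ v : Fin j → Fin q,
      (Finset.univ.filter fun r => ∀ s, M r (d s) = v s).card * q ^ j = N := by
  classical
  intro t
  induction t with
  | zero =>
    intro j hj d hd v
    subst hj
    obtain ⟨e, σ, he, hde⟩ := sorted_factor d hd
    have hset : (Finset.univ.filter fun r => ∀ s, M r (d s) = v s)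
        = (Finset.univ.filter fun r => ∀ s, M r (e s) = (fun t => v (σ.symm t)) s) := by
      apply Finset.filter_congr
      intro r _
      simp only [eq_iff_iff]
      constructor
      · intro h tt
        have := h (σ.symm tt)
        rwa [hde (σ.symm tt), Equiv.apply_symm_apply] at this
      · intro h s
        have := h (σ s)
        rwa [Equiv.symm_apply_apply, ← hde s] at this
    rw [hset]
    exact hOA e he _
  | succ t ih =>
    intro j hj d hd v
    -- find fresh column
    have hjk : j < k := by omega
    have hns : ¬ Function.Surjective d := by
      intro hs
      have := Fintype.card_le_of_surjective d hs
      simp at this; omega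
    rw [Function.Surjective] at hns
    push_neg at hns
    obtain ⟨a, ha⟩ := hns
    set d' : Fin (j+1) → Fin ν := Fin.snoc d a with hd'
    have hd'inj : Function.Injective d' := by
      intro s t hst
      induction s using Fin.lastCases with
      | last =>
        induction t using Fin.lastCases with
        | last => rfl
        | cast t =>
          rw [hd'] at hst
          simp [Fin.snoc_last, Fin.snoc_castSucc] at hst
          exact absurd hst.symm (ha t)
      | cast s =>
        induction t using Fin.lastCases with
        | last =>
          rw [hd'] at hst
          simp [Fin.snoc_last, Fin.snoc_castSucc] at hst
          exact absurd hst (ha s)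
        | cast t =>
          rw [hd'] at hst
          simp only [Fin.snoc_castSucc] at hst
          exact congrArg Fin.castSucc (hd hst)
    have hsplit : (Finset.univ.filter fun r => ∀ s, M r (d s) = v s).card
        = ∑ b : Fin q, (Finset.univ.filter fun r =>
            ∀ s, M r (d' s) = (Fin.snoc v b : Fin (j+1) → Fin q) s).card := by
      rw [Finset.card_eq_sum_card_fiberwise
        (f := fun r => M r a) (t := Finset.univ) (fun x _ => Finset.mem_univ _)]
      apply Finset.sum_congr rfl
      intro b _
      congr 1
      rw [Finset.filter_filter]
      apply Finset.filter_congr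
      intro r _
      constructor
      · rintro ⟨h1, h2⟩ s
        induction s using Fin.lastCases with
        | last => simpa [hd', Fin.snoc_last] using h2
        | cast s => simpa [hd', Fin.snoc_castSucc] using h1 s
      · intro h
        constructor
        · intro s
          have := h s.castSucc
          simpa [hd', Fin.snoc_castSucc] using this
        · have := h (Fin.last j)
          simpa [hd', Fin.snoc_last] using this
    have key : ∀ b : Fin q, (Finset.univ.filter fun r =>
        ∀ s, M r (d' s) = (Fin.snoc v b : Fin (j+1) → Fin q) s).card * q ^ (j+1) = N := by
      intro b
      exact ih (j+1) (by omega) d' hd'inj _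
    have : (Finset.univ.filter fun r => ∀ s, M r (d s) = v s).card * q ^ j * q = N * q := by
      calc (Finset.univ.filter fun r => ∀ s, M r (d s) = v s).card * q ^ j * q
          = (∑ b : Fin q, (Finset.univ.filter fun r =>
              ∀ s, M r (d' s) = (Fin.snoc v b : Fin (j+1) → Fin q) s).card) * q ^ (j+1) := by
            rw [hsplit]; ring
        _ = ∑ b : Fin q, ((Finset.univ.filter fun r =>
              ∀ s, M r (d' s) = (Fin.snoc v b : Fin (j+1) → Fin q) s).card * q ^ (j+1)) := by
            rw [Finset.sum_mul]
        _ = ∑ _b : Fin q, N := by exact Finset.sum_congr rfl fun b _ => key b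
        _ = N * q := by simp [mul_comm]
    exact Nat.eq_of_mul_eq_mul_right hq this

lemma countA_sum {q ν j : ℕ} {ρ : Type*} [Fintype ρ]
    (M : ρ → Fin ν → Fin q) (N : ℕ) (d : Fin j → Fin ν)
    (hcount : ∀ v : Fin j → Fin q,
      (Finset.univ.filter fun r => ∀ s, M r (d s) = v s).card * q ^ j = N)
    (P : (Fin j → Fin q) → ℝ) :
    (∑ r : ρ, P (fun s => M r (d s))) * (q : ℝ) ^ j
      = (N : ℝ) * ∑ z : Fin j → Fin q, P z := by
  classical
  have h1 : ∑ r : ρ, P (fun s => M r (d s))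
      = ∑ z : Fin j → Fin q, ∑ r ∈ Finset.univ.filter
          (fun r => (fun s => M r (d s)) = z), P (fun s => M r (d s)) := by
    rw [Finset.sum_fiberwise Finset.univ (fun r => (fun s => M r (d s))) _]
  rw [h1]
  have h2 : ∀ z : Fin j → Fin q,
      (∑ r ∈ Finset.univ.filter (fun r => (fun s => M r (d s)) = z), P (fun s => M r (d s)))
        = ((Finset.univ.filter fun r => ∀ s, M r (d s) = z s).card : ℝ) * P z := by
    intro z
    have : Finset.univ.filter (fun r => (fun s => M r (d s)) = z)
        = Finset.univ.filter (fun r => ∀ s, M r (d s) = z s) := by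
      apply Finset.filter_congr; intro r _; simp [funext_iff]
    rw [this]
    rw [Finset.sum_congr rfl (fun r hr => by
      simp only [Finset.mem_filter] at hr
      have : (fun s => M r (d s)) = z := funext hr.2
      rw [this])]
    simp [mul_comm]
  calc (∑ z : Fin j → Fin q, ∑ r ∈ Finset.univ.filter
          (fun r => (fun s => M r (d s)) = z), P (fun s => M r (d s))) * (q:ℝ)^j
      = ∑ z : Fin j → Fin q,
          ((Finset.univ.filter fun r => ∀ s, M r (d s) = z s).card : ℝ) * P z * (q:ℝ)^j := by
        rw [Finset.sum_mul]; exact Finset.sum_congr rfl fun z _ => by rw [h2 z]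
    _ = ∑ z : Fin j → Fin q, (N : ℝ) * P z := by
        apply Finset.sum_congr rfl; intro z _
        have := hcount z
        have hc : ((Finset.univ.filter fun r => ∀ s, M r (d s) = z s).card : ℝ) * (q:ℝ)^j
            = (N : ℝ) := by exact_mod_cast congrArg (Nat.cast : ℕ → ℝ) this
        calc ((Finset.univ.filter fun r => ∀ s, M r (d s) = z s).card : ℝ) * P z * (q:ℝ)^j
            = ((Finset.univ.filter fun r => ∀ s, M r (d s) = z s).card : ℝ) * (q:ℝ)^j * P z := by ring
          _ = (N:ℝ) * P z := by rw [hc]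
    _ = (N : ℝ) * ∑ z : Fin j → Fin q, P z := by rw [Finset.mul_sum]

lemma full_OA {q n : ℕ} :
    ∀ c : Fin n → Fin n, StrictMono c → ∀ v : Fin n → Fin q,
      (Finset.univ.filter fun (x : Fin n → Fin q) => ∀ s, x (c s) = v s).card * q ^ n
        = q ^ n := by
  classical
  intro c hc v
  have hbij : Function.Bijective c := Finite.injective_iff_bijective.mp hc.injective
  set ce := Equiv.ofBijective c hbij with hce
  have : (Finset.univ.filter fun (x : Fin n → Fin q) => ∀ s, x (c s) = v s)
      = {fun t => v (ce.symm t)} := by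
    ext x
    simp only [Finset.mem_filter, Finset.mem_univ, true_and, Finset.mem_singleton]
    constructor
    · intro h
      funext t
      have := h (ce.symm t)
      rwa [show c (ce.symm t) = t from ce.apply_symm_apply t] at this
    · intro h s
      rw [h]
      simp [show ce.symm (c s) = s from ce.symm_apply_apply s]
  rw [this, Finset.card_singleton, one_mul]
end Aux


/-- An instance of the (maximization) problem `k CSP-q` with `n` variables:
`m` weighted constraints, where constraint `i` has positive weight `w i`,
arity `arity i ≤ k`, a strictly increasing tuple `idx i` of indices of the
variables it depends on, and a constraint function `P i : Σ_q^{arity i} → ℝ`. -/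
structure CSPInstance (q k n : ℕ) where
  m : ℕ
  w : Fin m → ℝ
  w_pos : ∀ i, 0 < w i
  arity : Fin m → ℕ
  arity_le : ∀ i, arity i ≤ k
  idx : (i : Fin m) → Fin (arity i) → Fin n
  idx_mono : ∀ i, StrictMono (idx i)
  P : (i : Fin m) → ((Fin (arity i) → Fin q) → ℝ)

namespace CSPInstance

variable {q k n : ℕ}

/-- The objective value `v(I, x)` of a solution `x ∈ Σ_q^n`. -/
def value (I : CSPInstance q k n) (x : Fin n → Fin q) : ℝ :=
  ∑ i : Fin I.m, I.w i * I.P i (fun s => x (I.idx i s))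

/-- `opt(I)`, the best (maximum) objective value. -/
noncomputable def opt (I : CSPInstance q k n) : ℝ := sSup (Set.range I.value)

/-- `wor(I)`, the worst (minimum) objective value. -/
noncomputable def wor (I : CSPInstance q k n) : ℝ := sInf (Set.range I.value)

/-- `E[v(I,X)]`, the average objective value over all `q^n` solutions. -/
noncomputable def avg (I : CSPInstance q k n) : ℝ :=
  (∑ x : Fin n → Fin q, I.value x) / (q : ℝ) ^ n

/-- A strong coloring of `I` with `ν` colors: an assignment of colors to variables such
that the support of each constraint meets each color class in at most one index. -/
def StrongColoring (I : CSPInstance q k n) (ν : ℕ) : Prop :=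
  ∃ c : Fin n → Fin ν, ∀ i : Fin I.m, Function.Injective (fun s => c (I.idx i s))

end CSPInstance

/-- `M` is an orthogonal array `OA(R, ν, q, t)`: for every `t` pairwise distinct columns
`c 0 < ... < c (t-1)` and every word `v ∈ Σ_q^t`, exactly `R / q^t` rows of `M` restrict to
`v` on these columns. -/
def IsOA (R ν q t : ℕ) (M : Fin R → Fin ν → Fin q) : Prop :=
  ∀ c : Fin t → Fin ν, StrictMono c → ∀ v : Fin t → Fin q,
    (Finset.univ.filter fun r => ∀ s, M r (c s) = v s).card * q ^ t = R

/-- Let `q ≥ 2`, `k ≥ 2`, and let `I` be a maximization instance of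
`k CSP-q` with `n` variables, `opt(I) ≠ wor(I)`, admitting a strong coloring with `ν ≥ k`
colors. If there is an orthogonal array `OA(R, ν, q, k)` in which some word `u ∈ Σ_q^ν`
occurs as a row exactly `R* > 0` times, then
`E[v(I,X)] ≥ (R*/R)·opt(I) + (1 − R*/R)·wor(I)`. -/
theorem avg_diff_ratio_of_OA
    (q k n ν R Rstar : ℕ) (hq : 2 ≤ q) (hk : 2 ≤ k) (hνk : k ≤ ν)
    (I : CSPInstance q k n) (hne : I.opt ≠ I.wor)
    (hcol : I.StrongColoring ν)
    (M : Fin R → Fin ν → Fin q) (hOA : IsOA R ν q k M)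
    (u : Fin ν → Fin q)
    (hu : (Finset.univ.filter fun r => M r = u).card = Rstar)
    (hRs : 0 < Rstar) :
    (Rstar : ℝ) / R * I.opt + (1 - (Rstar : ℝ) / R) * I.wor ≤ I.avg := by
  classical
  haveI : NeZero q := ⟨by omega⟩
  have hq0 : 0 < q := by omega
  obtain ⟨cc, hcc⟩ := hcol
  have hnon : (Set.range I.value).Nonempty :=
    ⟨I.value (fun _ => ⟨0, hq0⟩), Set.mem_range_self _⟩
  have hfin : (Set.range I.value).Finite := Set.finite_range _
  obtain ⟨xs, hxs0⟩ := hnon.csSup_mem hfin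
  have hxs : I.value xs = I.opt := hxs0
  have hwor_le : ∀ x, I.wor ≤ I.value x := fun x => csInf_le hfin.bddBelow ⟨x, rfl⟩
  set y : Fin R → Fin n → Fin q := fun r jj => (xs jj - u (cc jj)) + M r (cc jj) with hy
  have hRsle : Rstar ≤ R := by
    rw [← hu]
    calc (Finset.univ.filter fun r => M r = u).card ≤ Finset.univ.card :=
          Finset.card_filter_le _ _
      _ = R := by simp
  have hRpos : 0 < R := lt_of_lt_of_le hRs hRsle
  -- per-constraint identity
  have key : ∀ i : Fin I.m,
      (∑ r : Fin R, I.P i (fun s => y r (I.idx i s))) * (q:ℝ)^n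
        = (R:ℝ) * ∑ x : Fin n → Fin q, I.P i (fun s => x (I.idx i s)) := by
    intro i
    set j := I.arity i with hj
    set d : Fin j → Fin ν := fun s => cc (I.idx i s) with hd
    have hdi : Function.Injective d := hcc i
    have hcountR : ∀ v : Fin j → Fin q,
        (Finset.univ.filter fun r => ∀ s, M r (d s) = v s).card * q ^ j = R :=
      countA hq0 hνk M R hOA (k - j) j (by have := I.arity_le i; omega) d hdi
    set τ : (Fin j → Fin q) ≃ (Fin j → Fin q) :=
      Equiv.piCongrRight (fun s => Equiv.addLeft (xs (I.idx i s) - u (d s))) with hτ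
    have hA := countA_sum M R d hcountR (fun z => I.P i (τ z))
    have hyd : ∀ r : Fin R, (τ (fun s => M r (d s))) = fun s => y r (I.idx i s) := by
      intro r; funext s
      simp [hτ, hy, hd, Equiv.piCongrRight]
    have hτsum : ∑ z : Fin j → Fin q, I.P i (τ z) = ∑ z : Fin j → Fin q, I.P i z :=
      τ.sum_comp (I.P i)
    have hA' : (∑ r : Fin R, I.P i (fun s => y r (I.idx i s))) * (q:ℝ)^j
        = (R:ℝ) * ∑ z : Fin j → Fin q, I.P i z := by
      have hsw : (∑ r : Fin R, I.P i (fun s => y r (I.idx i s)))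
          = ∑ r : Fin R, I.P i (τ (fun s => M r (d s))) :=
        Finset.sum_congr rfl fun r _ => by rw [hyd r]
      rw [hsw, ← hτsum]
      exact hA
    have hjn : j ≤ n := by
      have := Fintype.card_le_of_injective (I.idx i) (I.idx_mono i).injective
      simpa using this
    have hcountX : ∀ v : Fin j → Fin q,
        (Finset.univ.filter fun (x : Fin n → Fin q) => ∀ s, x (I.idx i s) = v s).card * q ^ j
          = q ^ n :=
      countA hq0 (le_refl n) (fun (x : Fin n → Fin q) c => x c) (q ^ n) full_OA
        (n - j) j (by omega) (I.idx i) (I.idx_mono i).injective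
    have hB := countA_sum (fun (x : Fin n → Fin q) c => x c) (q ^ n) (I.idx i) hcountX (I.P i)
    have hqj : ((q:ℝ))^j ≠ 0 := by positivity
    apply mul_right_cancel₀ hqj
    push_cast at hB
    calc (∑ r : Fin R, I.P i (fun s => y r (I.idx i s))) * (q:ℝ)^n * (q:ℝ)^j
        = ((∑ r : Fin R, I.P i (fun s => y r (I.idx i s))) * (q:ℝ)^j) * (q:ℝ)^n := by ring
      _ = ((R:ℝ) * ∑ z : Fin j → Fin q, I.P i z) * (q:ℝ)^n := by rw [hA']
      _ = (R:ℝ) * ((q:ℝ)^n * ∑ z : Fin j → Fin q, I.P i z) := by ring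
      _ = (R:ℝ) * ((∑ x : Fin n → Fin q, I.P i (fun s => x (I.idx i s))) * (q:ℝ)^j) := by
          rw [hB]
      _ = ((R:ℝ) * ∑ x : Fin n → Fin q, I.P i (fun s => x (I.idx i s))) * (q:ℝ)^j := by ring
  -- total identity
  have total : (∑ r : Fin R, I.value (y r)) * (q:ℝ)^n
      = (R:ℝ) * ∑ x : Fin n → Fin q, I.value x := by
    simp only [CSPInstance.value]
    rw [Finset.sum_comm, Finset.sum_mul]
    rw [show ((R:ℝ) * ∑ x : Fin n → Fin q, ∑ i : Fin I.m,
          I.w i * I.P i fun s => x (I.idx i s))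
        = ∑ i : Fin I.m, I.w i *
            ((R:ℝ) * ∑ x : Fin n → Fin q, I.P i fun s => x (I.idx i s)) by
      rw [Finset.sum_comm, Finset.mul_sum]
      exact Finset.sum_congr rfl fun i _ => by
        rw [Finset.mul_sum, Finset.mul_sum, Finset.mul_sum]
        exact Finset.sum_congr rfl fun x _ => by ring]
    apply Finset.sum_congr rfl
    intro i _
    rw [← Finset.mul_sum, mul_assoc, ← key i]
  have havg : I.avg = (∑ r : Fin R, I.value (y r)) / (R:ℝ) := by
    rw [CSPInstance.avg, div_eq_div_iff (by positivity) (Nat.cast_ne_zero.mpr hRpos.ne')]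
    linarith [total]
  -- lower bound on the row sum
  set A : Finset (Fin R) := Finset.univ.filter (fun r => M r = u) with hA
  have hyu : ∀ r ∈ A, y r = xs := by
    intro r hr
    rw [hA, Finset.mem_filter] at hr
    funext jj
    rw [hy]
    simp [hr.2, sub_add_cancel]
  have hcardA : A.card = Rstar := hu
  have hsumA : ∑ r ∈ A, I.value (y r) = (Rstar:ℝ) * I.opt := by
    rw [Finset.sum_congr rfl (fun r hr => by rw [hyu r hr, hxs])]
    rw [Finset.sum_const, hcardA, nsmul_eq_mul]
  have hcardA' : (Finset.univ.filter (fun r => ¬ M r = u)).card = R - Rstar := by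
    have := Finset.card_filter_add_card_filter_not
      (s := (Finset.univ : Finset (Fin R))) (p := fun r => M r = u)
    simp only [Finset.card_univ, Fintype.card_fin] at this
    rw [← hA] at this
    omega
  have hsumA' : ((R:ℝ) - (Rstar:ℝ)) * I.wor
      ≤ ∑ r ∈ Finset.univ.filter (fun r => ¬ M r = u), I.value (y r) := by
    have := Finset.card_nsmul_le_sum (Finset.univ.filter (fun r => ¬ M r = u))
      (fun r => I.value (y r)) I.wor (fun r _ => hwor_le (y r))
    rw [hcardA', nsmul_eq_mul, Nat.cast_sub hRsle] at this
    exact this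
  have hS : (Rstar:ℝ) * I.opt + ((R:ℝ) - (Rstar:ℝ)) * I.wor
      ≤ ∑ r : Fin R, I.value (y r) := by
    rw [← Finset.sum_filter_add_sum_filter_not Finset.univ (fun r => M r = u)
      (fun r => I.value (y r))]
    rw [← hA] at *
    linarith [hsumA', hsumA.ge, hsumA.le]
  rw [havg, le_div_iff₀ (by exact_mod_cast hRpos : (0:ℝ) < (R:ℝ))]
  have hRne : (R:ℝ) ≠ 0 := by positivity
  have expand : ((Rstar:ℝ) / R * I.opt + (1 - (Rstar:ℝ) / R) * I.wor) * (R:ℝ)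
      = (Rstar:ℝ) * I.opt + ((R:ℝ) - (Rstar:ℝ)) * I.wor := by
    field_simp
  rw [expand]
  exact hS
end

section
/- Let q ≥ 2 and k ≥ 2 be integers and let I be a maximization instance of k CSP-q with opt(I) ≠ wor(I) in which every constraint function P_i belongs to E_q, and which admits a strong coloring with ν colors, where ν ≥ k. Suppose there exists a difference scheme D_k(R, ν, q) M and a word v ∈ Σ_q^ν such that the total number of rows of M lying in {v + a·𝟏 : a ∈ Σ_q} equals R* > 0. Then the average differential ratio of I is at least R*/R; equivalently, E[v(I,X)] ≥ (R*/R)·opt(I) + (1 − R*/R)·wor(I). -/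
lemma sum_comp_inj {q a b : ℕ} (ι : Fin a → Fin b) (hι : Function.Injective ι)
    (f : (Fin a → Fin q) → ℝ) :
    ∑ z : Fin b → Fin q, f (fun s => z (ι s))
      = (q ^ (b - a) : ℕ) * ∑ y : Fin a → Fin q, f y := by
  classical
  set G : ((Fin a → Fin q) × (↥(Set.range ι)ᶜ → Fin q)) → (Fin b → Fin q) :=
    fun p t => if h : t ∈ Set.range ι then p.1 h.choose else p.2 ⟨t, h⟩ with hGdef
  have hG1 : ∀ p s, G p (ι s) = p.1 s := by
    intro p s
    have h : ι s ∈ Set.range ι := ⟨s, rfl⟩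
    simp only [hGdef, dif_pos h]
    exact congrArg p.1 (hι h.choose_spec)
  have hGsurj : Function.Surjective G := by
    intro z
    refine ⟨⟨fun s => z (ι s), fun t => z t.1⟩, funext fun t => ?_⟩
    by_cases h : t ∈ Set.range ι
    · simp only [hGdef, dif_pos h]
      exact congrArg z h.choose_spec
    · simp only [hGdef, dif_neg h]
  have hGinj : Function.Injective G := by
    intro p p' hpp
    have h1 : p.1 = p'.1 := funext fun s => by
      rw [← hG1 p s, ← hG1 p' s, hpp]
    have h2 : p.2 = p'.2 := funext fun t => by
      have := congrFun hpp t.1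
      simpa only [hGdef, dif_neg t.2] using this
    exact Prod.ext h1 h2
  have hsum : ∑ p : ((Fin a → Fin q) × (↥(Set.range ι)ᶜ → Fin q)), f p.1
      = ∑ z : Fin b → Fin q, f (fun s => z (ι s)) := by
    refine Fintype.sum_bijective G ⟨hGinj, hGsurj⟩ _ _ fun p => ?_
    congr 1
    exact funext fun s => (hG1 p s).symm
  rw [← hsum, Fintype.sum_prod_type]
  have hcard : Fintype.card (↥(Set.range ι)ᶜ → Fin q) = q ^ (b - a) := by
    rw [Fintype.card_fun, Fintype.card_fin]
    congr 1
    rw [Fintype.card_compl_set, Set.card_range_of_injective hι]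
    simp
  simp only [Finset.sum_const, Finset.card_univ, hcard, nsmul_eq_mul]
  rw [← Finset.mul_sum]


lemma exists_inj_extend {νn : ℕ} :
    ∀ (b a : ℕ) (hab : a ≤ b) (_ : b ≤ νn) (d : Fin a → Fin νn)
      (_ : Function.Injective d),
    ∃ e : Fin b → Fin νn, Function.Injective e ∧ ∀ s, e (Fin.castLE hab s) = d s := by
  intro b
  induction b with
  | zero =>
    intro a hab hb d hd
    have ha : a = 0 := Nat.le_zero.mp hab
    subst ha
    exact ⟨d, hd, fun s => congrArg d (Fin.ext rfl)⟩
  | succ b ih =>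
    intro a hab hb d hd
    rcases Nat.lt_or_ge a (b + 1) with h | h
    · have hab' : a ≤ b := Nat.lt_succ_iff.mp h
      obtain ⟨e₀, he₀, hcomp⟩ := ih a hab' (Nat.le_of_succ_le hb) d hd
      have hns : ¬ Function.Surjective e₀ := by
        intro hs
        have := Fintype.card_le_of_surjective e₀ hs
        simp only [Fintype.card_fin] at this
        omega
      obtain ⟨y, hy⟩ : ∃ y, ∀ i, e₀ i ≠ y := by
        by_contra hc
        push_neg at hc
        exact hns fun z => hc z
      refine ⟨Fin.snoc e₀ y, ?_, ?_⟩
      · intro t1 t2 h12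
        induction t1 using Fin.lastCases with
        | last =>
          induction t2 using Fin.lastCases with
          | last => rfl
          | cast j =>
            exfalso
            rw [Fin.snoc_last, Fin.snoc_castSucc] at h12
            exact hy j h12.symm
        | cast i =>
          induction t2 using Fin.lastCases with
          | last =>
            exfalso
            rw [Fin.snoc_last, Fin.snoc_castSucc] at h12
            exact hy i h12
          | cast j =>
            rw [Fin.snoc_castSucc, Fin.snoc_castSucc] at h12
            exact congrArg Fin.castSucc (he₀ h12)
      · intro s
        have : Fin.castLE hab s = Fin.castSucc (Fin.castLE hab' s) := Fin.ext rfl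
        rw [this, Fin.snoc_castSucc, hcomp]
    · have ha : a = b + 1 := le_antisymm hab h
      subst ha
      exact ⟨d, hd, fun s => congrArg d (Fin.ext rfl)⟩



/-- A function `P : Σ_q^κ → ℝ` belongs to the family `E_q` if it is invariant under a
uniform shift of all its inputs (addition is componentwise mod `q`). -/
def MemE (q : ℕ) {κ : ℕ} (P : (Fin κ → Fin q) → ℝ) : Prop :=
  ∀ (y : Fin κ → Fin q) (a : Fin q), P (fun s => y s + a) = P y

/-- `M` is a difference scheme `D_t(R, ν, q)` based on `(ℤ_q, +)`: for every `t` pairwise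
distinct columns `c 0 < ... < c (t-1)` and every word `v ∈ Σ_q^t`, exactly `R / q^(t-1)` rows
of `M` restrict on these columns to a word of the form `v + a·𝟏`, `a ∈ Σ_q`. -/
def IsDS (R ν q t : ℕ) (M : Fin R → Fin ν → Fin q) : Prop :=
  ∀ c : Fin t → Fin ν, StrictMono c → ∀ v : Fin t → Fin q,
    (Finset.univ.filter fun r => ∃ a : Fin q, ∀ s, M r (c s) = v s + a).card * q ^ (t - 1) = R

lemma isDS_inj {R ν q t : ℕ} {M : Fin R → Fin ν → Fin q} (hDS : IsDS R ν q t M)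
    (e : Fin t → Fin ν) (he : Function.Injective e) (v : Fin t → Fin q) :
    (Finset.univ.filter fun r => ∃ a : Fin q, ∀ s, M r (e s) = v s + a).card * q ^ (t - 1) = R := by
  classical
  set σ := Tuple.sort e with hσ
  have hmono : StrictMono (e ∘ σ) :=
    (Tuple.monotone_sort e).strictMono_of_injective (he.comp σ.injective)
  have h1 := hDS (e ∘ σ) hmono (v ∘ σ)
  have hset : (Finset.univ.filter fun r => ∃ a : Fin q, ∀ s, M r ((e ∘ σ) s) = (v ∘ σ) s + a)
      = (Finset.univ.filter fun r => ∃ a : Fin q, ∀ s, M r (e s) = v s + a) := by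
    ext r
    simp only [Finset.mem_filter, Finset.mem_univ, true_and, Function.comp_apply]
    constructor
    · rintro ⟨a, ha⟩
      refine ⟨a, fun s => ?_⟩
      have := ha (σ.symm s)
      simpa using this
    · rintro ⟨a, ha⟩; exact ⟨a, fun s => ha (σ s)⟩
  rw [hset] at h1
  exact h1

lemma key_row_sum {R ν q k : ℕ} (hq : 2 ≤ q) (hk : 1 ≤ k)
    {M : Fin R → Fin ν → Fin q} (hDS : IsDS R ν q k M)
    (e : Fin k → Fin ν) (he : Function.Injective e)
    (Q : (Fin k → Fin q) → ℝ) (hQ : MemE q Q) (u : Fin k → Fin q) :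
    (q : ℝ) ^ k * ∑ r : Fin R, Q (fun s => u s + M r (e s))
      = (R : ℝ) * ∑ z : Fin k → Fin q, Q z := by
  classical
  haveI : NeZero q := ⟨by omega⟩
  set S : (Fin k → Fin q) → Finset (Fin R) :=
    fun w => Finset.univ.filter fun r => ∃ a : Fin q, ∀ s, M r (e s) = w s + a with hS
  -- Step A: double counting
  have stepA : ∑ w : Fin k → Fin q, ∑ r ∈ S w, Q (fun s => u s + M r (e s))
      = (q : ℝ) * ∑ r : Fin R, Q (fun s => u s + M r (e s)) := by
    have hswap : ∑ w : Fin k → Fin q, ∑ r ∈ S w, Q (fun s => u s + M r (e s))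
        = ∑ r : Fin R, ∑ w ∈ (Finset.univ.filter fun w : Fin k → Fin q =>
            ∃ a : Fin q, ∀ s, M r (e s) = w s + a), Q (fun s => u s + M r (e s)) := by
      simp only [hS, Finset.sum_filter]
      exact Finset.sum_comm
    rw [hswap]
    rw [Finset.mul_sum]
    refine Finset.sum_congr rfl fun r _ => ?_
    rw [Finset.sum_const]
    have hcard : (Finset.univ.filter fun w : Fin k → Fin q =>
        ∃ a : Fin q, ∀ s, M r (e s) = w s + a).card = q := by
      have himg : (Finset.univ.filter fun w : Fin k → Fin q =>
          ∃ a : Fin q, ∀ s, M r (e s) = w s + a)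
          = Finset.univ.image (fun a : Fin q => fun s => M r (e s) - a) := by
        ext w
        simp only [Finset.mem_filter, Finset.mem_univ, true_and, Finset.mem_image]
        constructor
        · rintro ⟨a, ha⟩
          refine ⟨a, funext fun s => ?_⟩
          rw [ha s]
          exact add_sub_cancel_right (w s) a
        · rintro ⟨a, -, rfl⟩
          exact ⟨a, fun s => (sub_add_cancel (M r (e s)) a).symm⟩
      rw [himg, Finset.card_image_of_injective _ ?_, Finset.card_univ, Fintype.card_fin]
      intro a a' haa
      have := congrFun haa ⟨0, by omega⟩
      exact sub_right_injective this
    rw [hcard, nsmul_eq_mul]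
  -- Step B : each class sums to card * value
  have stepB : ∀ w : Fin k → Fin q, ∑ r ∈ S w, Q (fun s => u s + M r (e s))
      = ((S w).card : ℝ) * Q (fun s => u s + w s) := by
    intro w
    rw [Finset.sum_congr rfl (fun r hr => ?_), Finset.sum_const, nsmul_eq_mul]
    simp only [hS, Finset.mem_filter] at hr
    obtain ⟨-, a, ha⟩ := hr
    have : (fun s => u s + M r (e s)) = fun s => (u s + w s) + a := by
      funext s; rw [ha s, add_assoc]
    rw [this]
    exact hQ (fun s => u s + w s) a
  -- cardinalities
  have stepC : ∀ w : Fin k → Fin q, ((S w).card : ℝ) * (q : ℝ) ^ (k - 1) = (R : ℝ) := by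
    intro w
    have := isDS_inj hDS e he w
    exact_mod_cast congrArg (fun x : ℕ => (x : ℝ)) this
  have hpow : (q : ℝ) ^ k = (q : ℝ) ^ (k - 1) * q := by
    rw [← pow_succ]
    congr 1
    omega
  have main : (q : ℝ) ^ (k - 1) * ((q : ℝ) * ∑ r : Fin R, Q (fun s => u s + M r (e s)))
      = (R : ℝ) * ∑ w : Fin k → Fin q, Q (fun s => u s + w s) := by
    rw [← stepA, Finset.mul_sum, Finset.mul_sum]
    refine Finset.sum_congr rfl fun w _ => ?_
    rw [stepB w]
    calc (q:ℝ)^(k-1) * (((S w).card : ℝ) * Q (fun s => u s + w s))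
        = (((S w).card : ℝ) * (q:ℝ)^(k-1)) * Q (fun s => u s + w s) := by ring
      _ = (R:ℝ) * Q (fun s => u s + w s) := by rw [stepC w]
  have hshift : ∑ w : Fin k → Fin q, Q (fun s => u s + w s) = ∑ z : Fin k → Fin q, Q z := by
    exact Fintype.sum_bijective (fun w => u + w) (Equiv.addLeft u).bijective
      (fun w => Q (fun s => u s + w s)) Q (fun w => rfl)
  have hre : (q:ℝ)^k * ∑ r : Fin R, Q (fun s => u s + M r (e s))
      = (q:ℝ)^(k-1) * ((q:ℝ) * ∑ r : Fin R, Q (fun s => u s + M r (e s))) := by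
    rw [hpow]; ring
  rw [hre, main, hshift]

/-- Let `q ≥ 2`, `k ≥ 2`, and let `I` be a maximization instance of
`k CSP-q` with `opt(I) ≠ wor(I)` whose constraint functions all belong to `E_q`, and
which admits a strong coloring with `ν ≥ k` colors. If there is a difference scheme
`D_k(R, ν, q)` `M` and a word `v ∈ Σ_q^ν` such that the number of rows of `M` lying in
`{v + a·𝟏 : a ∈ Σ_q}` equals `R* > 0`, then
`E[v(I,X)] ≥ (R*/R)·opt(I) + (1 − R*/R)·wor(I)`. -/
theorem avg_diff_ratio_of_DS
    (q k n ν R Rstar : ℕ) (hq : 2 ≤ q) (hk : 2 ≤ k) (hνk : k ≤ ν)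
    (I : CSPInstance q k n) (hne : I.opt ≠ I.wor)
    (hEq : ∀ i : Fin I.m, MemE q (I.P i))
    (hcol : I.StrongColoring ν)
    (M : Fin R → Fin ν → Fin q) (hDS : IsDS R ν q k M)
    (v : Fin ν → Fin q)
    (hv : (Finset.univ.filter fun r => ∃ a : Fin q, ∀ j, M r j = v j + a).card = Rstar)
    (hRs : 0 < Rstar) :
    (Rstar : ℝ) / R * I.opt + (1 - (Rstar : ℝ) / R) * I.wor ≤ I.avg := by
  classical
  haveI : NeZero q := ⟨by omega⟩
  obtain ⟨c, hc⟩ := hcol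
  -- basic facts on opt / wor
  have hfin : (Set.range I.value).Finite := Set.finite_range _
  have hnonempty : (Set.range I.value).Nonempty := ⟨_, ⟨fun _ => 0, rfl⟩⟩
  obtain ⟨xstar, hxstar⟩ := hnonempty.csSup_mem hfin
  have hle_opt : ∀ x, I.value x ≤ I.opt := fun x => le_csSup hfin.bddAbove ⟨x, rfl⟩
  have hwor_le : ∀ x, I.wor ≤ I.value x := fun x => csInf_le hfin.bddBelow ⟨x, rfl⟩
  have hRsR : Rstar ≤ R := by
    rw [← hv]
    calc (Finset.univ.filter fun r : Fin R => ∃ a : Fin q, ∀ j, M r j = v j + a).card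
        ≤ (Finset.univ : Finset (Fin R)).card := Finset.card_filter_le _ _
      _ = R := by simp
  have hR : 0 < R := lt_of_lt_of_le hRs hRsR
  have hq0 : (0:ℝ) < (q:ℝ) := by exact_mod_cast Nat.lt_of_lt_of_le Nat.zero_lt_two hq
  have hqn : (0:ℝ) < (q:ℝ)^n := pow_pos hq0 n
  have hRpos : (0:ℝ) < (R:ℝ) := by exact_mod_cast hR
  -- shift invariance of the objective value
  have hshiftval : ∀ (x : Fin n → Fin q) (a : Fin q),
      I.value (fun j => x j + a) = I.value x := by
    intro x a
    refine Finset.sum_congr rfl fun i _ => ?_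
    congr 1
    exact hEq i (fun s => x (I.idx i s)) a
  -- the row solutions
  set xr : Fin R → Fin n → Fin q := fun r j => xstar j - v (c j) + M r (c j) with hxr
  -- good rows are optimal
  have hgood : ∀ r : Fin R, (∃ a : Fin q, ∀ j, M r j = v j + a) →
      I.value (xr r) = I.opt := by
    rintro r ⟨a, ha⟩
    have hxra : xr r = fun j => xstar j + a := by
      funext j
      show xstar j - v (c j) + M r (c j) = xstar j + a
      rw [ha (c j)]
      abel
    rw [hxra, hshiftval, hxstar]
    rfl
  -- per-constraint row sums
  have hk1 : 1 ≤ k := by omega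
  have perI : ∀ i : Fin I.m,
      (q:ℝ)^k * ∑ r : Fin R, I.P i (fun s => xr r (I.idx i s))
        = (R:ℝ) * ((q ^ (k - I.arity i) : ℕ) *
            ∑ y : Fin (I.arity i) → Fin q, I.P i y) := by
    intro i
    obtain ⟨e, he, hecomp⟩ := exists_inj_extend k (I.arity i) (I.arity_le i) hνk
      (fun s => c (I.idx i s)) (hc i)
    set Q : (Fin k → Fin q) → ℝ :=
      fun z => I.P i (fun s => z (Fin.castLE (I.arity_le i) s)) with hQdef
    have hQE : MemE q Q := fun z a => hEq i (fun s => z (Fin.castLE (I.arity_le i) s)) a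
    set u : Fin k → Fin q := fun t =>
      (if h : (t : ℕ) < I.arity i then xstar (I.idx i ⟨t.1, h⟩) else 0) - v (e t) with hu
    have hterm : ∀ r, I.P i (fun s => xr r (I.idx i s)) = Q (fun t => u t + M r (e t)) := by
      intro r
      show I.P i _ = I.P i _
      congr 1
      funext s
      have h1 : e (Fin.castLE (I.arity_le i) s) = c (I.idx i s) := hecomp s
      have h2 : ((Fin.castLE (I.arity_le i) s : Fin k) : ℕ) < I.arity i := s.isLt
      have h3 : (⟨((Fin.castLE (I.arity_le i) s : Fin k) : ℕ), h2⟩ : Fin (I.arity i)) = s :=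
        Fin.ext rfl
      show xstar (I.idx i s) - v (c (I.idx i s)) + M r (c (I.idx i s))
          = (if h : ((Fin.castLE (I.arity_le i) s : Fin k) : ℕ) < I.arity i
              then xstar (I.idx i ⟨((Fin.castLE (I.arity_le i) s : Fin k) : ℕ), h⟩) else 0)
            - v (e (Fin.castLE (I.arity_le i) s)) + M r (e (Fin.castLE (I.arity_le i) s))
      rw [dif_pos h2, h3, h1]
    have hsum1 : ∑ r : Fin R, I.P i (fun s => xr r (I.idx i s))
        = ∑ r : Fin R, Q (fun t => u t + M r (e t)) :=
      Finset.sum_congr rfl fun r _ => hterm r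
    have hkey := key_row_sum hq hk1 hDS e he Q hQE u
    have hQsum : ∑ z : Fin k → Fin q, Q z
        = (q ^ (k - I.arity i) : ℕ) * ∑ y : Fin (I.arity i) → Fin q, I.P i y := by
      have hinj : Function.Injective (Fin.castLE (I.arity_le i)) := by
        intro a b hab
        exact Fin.ext (by simpa using congrArg Fin.val hab)
      exact sum_comp_inj (Fin.castLE (I.arity_le i)) hinj (I.P i)
    rw [hsum1, hkey, hQsum]
  -- per-constraint full sums
  have perX : ∀ i : Fin I.m,
      ∑ x : Fin n → Fin q, I.P i (fun s => x (I.idx i s))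
        = (q ^ (n - I.arity i) : ℕ) * ∑ y : Fin (I.arity i) → Fin q, I.P i y :=
    fun i => sum_comp_inj (I.idx i) (I.idx_mono i).injective (I.P i)
  have harity_n : ∀ i : Fin I.m, I.arity i ≤ n := by
    intro i
    have := Fintype.card_le_of_injective (I.idx i) (I.idx_mono i).injective
    simpa using this
  -- sums of values, reorganized per constraint
  have hA : ∑ r : Fin R, I.value (xr r)
      = ∑ i : Fin I.m, I.w i * ∑ r : Fin R, I.P i (fun s => xr r (I.idx i s)) := by
    unfold CSPInstance.value
    rw [Finset.sum_comm]
    exact Finset.sum_congr rfl fun i _ => by rw [Finset.mul_sum]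
  have hB : ∑ x : Fin n → Fin q, I.value x
      = ∑ i : Fin I.m, I.w i * ∑ x : Fin n → Fin q, I.P i (fun s => x (I.idx i s)) := by
    unfold CSPInstance.value
    rw [Finset.sum_comm]
    exact Finset.sum_congr rfl fun i _ => by rw [Finset.mul_sum]
  -- the master identity
  have key2 : (q:ℝ)^n * ((q:ℝ)^k * ∑ r : Fin R, I.value (xr r))
      = (q:ℝ)^k * ((R:ℝ) * ∑ x : Fin n → Fin q, I.value x) := by
    rw [hA, hB, Finset.mul_sum, Finset.mul_sum, Finset.mul_sum, Finset.mul_sum]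
    refine Finset.sum_congr rfl fun i _ => ?_
    have hpows : (q:ℝ)^n * ((q ^ (k - I.arity i) : ℕ) : ℝ)
        = (q:ℝ)^k * ((q ^ (n - I.arity i) : ℕ) : ℝ) := by
      push_cast
      rw [← pow_add, ← pow_add]
      congr 1
      have h1 := I.arity_le i
      have h2 := harity_n i
      omega
    calc (q:ℝ)^n * ((q:ℝ)^k * (I.w i * ∑ r : Fin R, I.P i (fun s => xr r (I.idx i s))))
        = I.w i * ((q:ℝ)^n * ((q:ℝ)^k * ∑ r : Fin R, I.P i (fun s => xr r (I.idx i s)))) := by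
          ring
      _ = I.w i * ((q:ℝ)^n * ((R:ℝ) * ((q ^ (k - I.arity i) : ℕ) *
            ∑ y : Fin (I.arity i) → Fin q, I.P i y))) := by rw [perI i]
      _ = I.w i * ((R:ℝ) * (((q:ℝ)^n * ((q ^ (k - I.arity i) : ℕ) : ℝ)) *
            ∑ y : Fin (I.arity i) → Fin q, I.P i y)) := by ring
      _ = I.w i * ((R:ℝ) * (((q:ℝ)^k * ((q ^ (n - I.arity i) : ℕ) : ℝ)) *
            ∑ y : Fin (I.arity i) → Fin q, I.P i y)) := by rw [hpows]
      _ = (q:ℝ)^k * ((R:ℝ) * (I.w i * ((q ^ (n - I.arity i) : ℕ) *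
            ∑ y : Fin (I.arity i) → Fin q, I.P i y))) := by ring
      _ = (q:ℝ)^k * ((R:ℝ) * (I.w i * ∑ x : Fin n → Fin q,
            I.P i (fun s => x (I.idx i s)))) := by rw [perX i]
  have key : (q:ℝ)^n * ∑ r : Fin R, I.value (xr r)
      = (R:ℝ) * ∑ x : Fin n → Fin q, I.value x := by
    have hqk : ((q:ℝ)^k) ≠ 0 := ne_of_gt (pow_pos hq0 k)
    apply mul_left_cancel₀ hqk
    calc (q:ℝ)^k * ((q:ℝ)^n * ∑ r : Fin R, I.value (xr r))
        = (q:ℝ)^n * ((q:ℝ)^k * ∑ r : Fin R, I.value (xr r)) := by ring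
      _ = (q:ℝ)^k * ((R:ℝ) * ∑ x : Fin n → Fin q, I.value x) := key2
  -- lower bound on the row sum
  have lower : (Rstar:ℝ) * I.opt + ((R:ℝ) - Rstar) * I.wor
      ≤ ∑ r : Fin R, I.value (xr r) := by
    have hsplit := Finset.sum_filter_add_sum_filter_not Finset.univ
      (fun r : Fin R => ∃ a : Fin q, ∀ j, M r j = v j + a) (fun r => I.value (xr r))
    rw [← hsplit]
    have h1 : ∑ r ∈ Finset.univ.filter (fun r : Fin R => ∃ a : Fin q, ∀ j, M r j = v j + a),
        I.value (xr r) = (Rstar:ℝ) * I.opt := by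
      rw [Finset.sum_congr rfl (fun r hr => hgood r (Finset.mem_filter.mp hr).2),
        Finset.sum_const, hv, nsmul_eq_mul]
    have hcard2 : (Finset.univ.filter
        (fun r : Fin R => ¬ ∃ a : Fin q, ∀ j, M r j = v j + a)).card = R - Rstar := by
      have hh := Finset.card_filter_add_card_filter_not
        (s := (Finset.univ : Finset (Fin R)))
        (p := fun r : Fin R => ∃ a : Fin q, ∀ j, M r j = v j + a)
      rw [hv] at hh
      simp only [Finset.card_univ, Fintype.card_fin] at hh
      omega
    have h2 : ((R:ℝ) - Rstar) * I.wor
        ≤ ∑ r ∈ Finset.univ.filter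
            (fun r : Fin R => ¬ ∃ a : Fin q, ∀ j, M r j = v j + a), I.value (xr r) := by
      have hns := Finset.card_nsmul_le_sum
        (Finset.univ.filter (fun r : Fin R => ¬ ∃ a : Fin q, ∀ j, M r j = v j + a))
        (fun r => I.value (xr r)) I.wor (fun r _ => hwor_le _)
      rw [hcard2] at hns
      have hcast : ((R - Rstar : ℕ) : ℝ) = (R:ℝ) - Rstar := by
        exact Nat.cast_sub hRsR
      rw [nsmul_eq_mul, hcast] at hns
      exact hns
    linarith
  -- conclusion
  have hAsum : ∑ r : Fin R, I.value (xr r) = (R:ℝ) * I.avg := by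
    have havg : (R:ℝ) * I.avg = ((R:ℝ) * ∑ x : Fin n → Fin q, I.value x) / (q:ℝ)^n := by
      rw [CSPInstance.avg]
      ring
    rw [havg, ← key, mul_comm ((q:ℝ)^n) _, mul_div_assoc, div_self (ne_of_gt hqn), mul_one]
  have hfinal : ((Rstar:ℝ) * I.opt + ((R:ℝ) - Rstar) * I.wor) / R ≤ I.avg := by
    rw [div_le_iff₀ hRpos]
    calc (Rstar:ℝ) * I.opt + ((R:ℝ) - Rstar) * I.wor
        ≤ ∑ r : Fin R, I.value (xr r) := lower
      _ = (R:ℝ) * I.avg := hAsum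
      _ = I.avg * (R:ℝ) := mul_comm _ _
  have hEqgoal : (Rstar : ℝ) / R * I.opt + (1 - (Rstar : ℝ) / R) * I.wor
      = ((Rstar:ℝ) * I.opt + ((R:ℝ) - Rstar) * I.wor) / R := by
    field_simp
  rw [hEqgoal]
  exact hfinal
end

section
/- Let q ≥ 2, k ≥ 2 and t ∈ {1,...,k−1} be integers and let I be a maximization instance of k CSP-q with opt(I) ≠ wor(I) in which every constraint function has arity at least t and is balanced t-wise independent, and which admits a strong coloring with ν colors, where ν ≥ k. Suppose there exists an orthogonal array OA(R, ν−t, q, min{k, ν−t}) in which some word of Σ_q^{ν−t} occurs as a row exactly R* > 0 times. Then the average differential ratio of I is at least R*/R; equivalently, E[v(I,X)] ≥ (R*/R)·opt(I) + (1 − R*/R)·wor(I). -/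
/-- A function `P : Σ_q^κ → ℝ` is balanced `t`-wise independent: for every `t` indices
`j 0 < ... < j (t-1)` and every `v ∈ Σ_q^t`, the average of `P` over the slice
`{y : y ∘ j = v}` equals the average of `P` over `Σ_q^κ` (stated in a fraction-free way:
the slice has `q^(κ-t)` elements and the full cube has `q^κ` elements). -/
def BalancedTwise (q t : ℕ) {κ : ℕ} (P : (Fin κ → Fin q) → ℝ) : Prop :=
  ∀ j : Fin t → Fin κ, StrictMono j → ∀ v : Fin t → Fin q,
    (∑ y ∈ Finset.univ.filter (fun y : Fin κ → Fin q => ∀ s, y (j s) = v s), P y) * (q : ℝ) ^ t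
      = ∑ y : Fin κ → Fin q, P y

open Finset in
lemma ext_count {q s t : ℕ} (hq : 0 < q) (e : Fin s → Fin t) (he : Function.Injective e)
    (v : Fin s → Fin q) :
    (univ.filter fun v' : Fin t → Fin q => ∀ p, v' (e p) = v p).card * q ^ s = q ^ t := by
  haveI : NeZero q := ⟨hq.ne'⟩
  have key : ∀ v₁ v₂ : Fin s → Fin q,
      (univ.filter fun v' : Fin t → Fin q => ∀ p, v' (e p) = v₁ p).card
      = (univ.filter fun v' : Fin t → Fin q => ∀ p, v' (e p) = v₂ p).card := by
    intro v₁ v₂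
    apply Finset.card_nbij' (fun v' x => v' x + Function.extend e (fun p => v₂ p - v₁ p) 0 x)
      (fun w x => w x - Function.extend e (fun p => v₂ p - v₁ p) 0 x)
    · intro a ha
      simp only [mem_coe, mem_filter, mem_univ, true_and] at ha ⊢
      intro p; rw [he.extend_apply, ha p]; abel
    · intro a ha
      simp only [mem_coe, mem_filter, mem_univ, true_and] at ha ⊢
      intro p; rw [he.extend_apply, ha p]; abel
    · intro a _; funext x; simp
    · intro a _; funext x; simp
  have h1 : (univ : Finset (Fin t → Fin q)).card
      = ∑ w ∈ (univ : Finset (Fin s → Fin q)),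
          ((univ : Finset (Fin t → Fin q)).filter fun v' => (fun p => v' (e p)) = w).card :=
    Finset.card_eq_sum_card_fiberwise (fun x _ => mem_univ _)
  simp only [funext_iff] at h1
  rw [card_univ, Fintype.card_fun, Fintype.card_fin, Fintype.card_fin] at h1
  have h2 : ∀ w ∈ (univ : Finset (Fin s → Fin q)),
      ((univ : Finset (Fin t → Fin q)).filter fun v' => ∀ p, v' (e p) = w p).card
      = ((univ : Finset (Fin t → Fin q)).filter fun v' => ∀ p, v' (e p) = v p).card :=
    fun w _ => key w v
  rw [Finset.sum_congr rfl h2, Finset.sum_const, card_univ, Fintype.card_fun,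
    Fintype.card_fin, Fintype.card_fin, smul_eq_mul] at h1
  rw [mul_comm]; exact h1.symm

open Finset in
lemma slice_partition {q s t κ : ℕ} (d : Fin t → Fin κ) (e : Fin s → Fin t)
    (g : (Fin κ → Fin q) → ℝ) (v : Fin s → Fin q) :
    ∑ y ∈ univ.filter (fun y : Fin κ → Fin q => ∀ p, y (d (e p)) = v p), g y
    = ∑ v' ∈ univ.filter (fun v' : Fin t → Fin q => ∀ p, v' (e p) = v p),
        ∑ y ∈ univ.filter (fun y : Fin κ → Fin q => ∀ p, y (d p) = v' p), g y := by
  rw [← Finset.sum_fiberwise_of_maps_to (g := fun y : Fin κ → Fin q => fun p => y (d p))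
      (t := univ.filter fun v' : Fin t → Fin q => ∀ p, v' (e p) = v p)
      (fun y hy => by
        simp only [mem_filter, mem_univ, true_and] at hy ⊢
        intro p; exact hy p) g]
  apply Finset.sum_congr rfl
  intro v' hv'
  simp only [mem_filter, mem_univ, true_and] at hv'
  apply Finset.sum_congr _ (fun _ _ => rfl)
  ext y
  simp only [mem_filter, mem_univ, true_and, funext_iff]
  constructor
  · rintro ⟨h1, h2⟩; exact h2
  · intro h; exact ⟨fun p => by rw [h (e p), hv' p], h⟩

open Finset in
lemma exists_mono_ext {s t κ : ℕ} (hst : s ≤ t) (htκ : t ≤ κ)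
    (j : Fin s → Fin κ) (hj : Function.Injective j) :
    ∃ (d : Fin t → Fin κ) (e : Fin s → Fin t),
      StrictMono d ∧ Function.Injective e ∧ ∀ p, d (e p) = j p := by
  obtain ⟨U, hU1, hU2⟩ := Finset.exists_superset_card_eq
    (show (Finset.image j univ).card ≤ t by
      rw [Finset.card_image_of_injective _ hj, card_univ, Fintype.card_fin]; exact hst)
    (by simpa using htκ)
  have hmem : ∀ p, j p ∈ U := fun p => hU1 (Finset.mem_image_of_mem _ (mem_univ p))
  refine ⟨U.orderEmbOfFin hU2, fun p => (U.orderIsoOfFin hU2).symm ⟨j p, hmem p⟩,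
    (U.orderEmbOfFin hU2).strictMono, ?_, ?_⟩
  · intro p₁ p₂ h
    apply hj
    have h1 := congrArg (U.orderIsoOfFin hU2) h
    rw [OrderIso.apply_symm_apply, OrderIso.apply_symm_apply] at h1
    exact congrArg Subtype.val h1
  · intro p
    rw [← Finset.coe_orderIsoOfFin_apply, OrderIso.apply_symm_apply]

open Finset in
lemma oa_reduce {R ν q tt : ℕ} (hq : 0 < q) {M : Fin R → Fin ν → Fin q}
    (hOA : IsOA R ν q tt M) {s : ℕ} (hst : s ≤ tt) (htν : tt ≤ ν)
    (c : Fin s → Fin ν) (hc : Function.Injective c) (v : Fin s → Fin q) :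
    (univ.filter fun r => ∀ p, M r (c p) = v p).card * q ^ s = R := by
  obtain ⟨d, e, hd, he, hde⟩ := exists_mono_ext hst htν c hc
  set E := univ.filter fun v' : Fin tt → Fin q => ∀ p, v' (e p) = v p with hE
  have hgroup : (univ.filter fun r => ∀ p, M r (c p) = v p).card
      = ∑ v' ∈ E, (univ.filter fun r : Fin R => ∀ p, M r (d p) = v' p).card := by
    rw [Finset.card_eq_sum_card_fiberwise
      (f := fun r : Fin R => fun p => M r (d p)) (t := E)
      (fun r hr => by
        simp only [hE, mem_coe, mem_filter, mem_univ, true_and] at hr ⊢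
        intro p; rw [hde p]; exact hr p)]
    apply Finset.sum_congr rfl
    intro v' hv'
    simp only [hE, mem_filter, mem_univ, true_and] at hv'
    congr 1
    ext r
    simp only [mem_filter, mem_univ, true_and, funext_iff]
    constructor
    · rintro ⟨h1, h2⟩; exact h2
    · intro h; exact ⟨fun p => by rw [← hde p, h (e p), hv' p], h⟩
  have hcardE : E.card * q ^ s = q ^ tt := ext_count hq e he v
  have hEpos : 0 < E.card := by
    rcases Nat.eq_zero_or_pos E.card with h | h
    · exfalso; rw [h, zero_mul] at hcardE; exact (pow_pos hq tt).ne' hcardE.symm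
    · exact h
  have key : (univ.filter fun r => ∀ p, M r (c p) = v p).card * q ^ tt = E.card * R := by
    rw [hgroup, Finset.sum_mul]
    rw [Finset.sum_congr rfl (fun v' _ => hOA d hd v'), Finset.sum_const, smul_eq_mul]
  have : E.card * ((univ.filter fun r => ∀ p, M r (c p) = v p).card * q ^ s) = E.card * R := by
    calc E.card * ((univ.filter fun r => ∀ p, M r (c p) = v p).card * q ^ s)
        = (univ.filter fun r => ∀ p, M r (c p) = v p).card * (E.card * q ^ s) := by ring
      _ = (univ.filter fun r => ∀ p, M r (c p) = v p).card * q ^ tt := by rw [hcardE]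
      _ = E.card * R := key
  exact Nat.eq_of_mul_eq_mul_left hEpos this

open Finset in
lemma balanced_reduce {q tt κ : ℕ} (hq : 0 < q) {P : (Fin κ → Fin q) → ℝ}
    (hP : BalancedTwise q tt P) {s : ℕ} (hst : s ≤ tt) (htκ : tt ≤ κ)
    (j : Fin s → Fin κ) (hj : Function.Injective j) (v : Fin s → Fin q) :
    (∑ y ∈ univ.filter (fun y : Fin κ → Fin q => ∀ p, y (j p) = v p), P y) * (q : ℝ) ^ s
      = ∑ y : Fin κ → Fin q, P y := by
  obtain ⟨d, e, hd, he, hde⟩ := exists_mono_ext hst htκ j hj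
  set E := univ.filter fun v' : Fin tt → Fin q => ∀ p, v' (e p) = v p with hE
  have hpart := slice_partition d e P v
  simp only [hde] at hpart
  have hcardE : E.card * q ^ s = q ^ tt := ext_count hq e he v
  have key : (∑ y ∈ univ.filter (fun y : Fin κ → Fin q => ∀ p, y (j p) = v p), P y) * (q : ℝ) ^ tt
      = (E.card : ℝ) * ∑ y : Fin κ → Fin q, P y := by
    rw [hpart, Finset.sum_mul, Finset.sum_congr rfl (fun v' _ => hP d hd v'),
      Finset.sum_const, nsmul_eq_mul]
  have hq' : ((q : ℝ) ^ tt) ≠ 0 := by positivity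
  apply mul_right_cancel₀ hq'
  calc (∑ y ∈ univ.filter (fun y : Fin κ → Fin q => ∀ p, y (j p) = v p), P y) * (q:ℝ) ^ s * (q:ℝ) ^ tt
      = ((∑ y ∈ univ.filter (fun y : Fin κ → Fin q => ∀ p, y (j p) = v p), P y) * (q:ℝ) ^ tt) * (q:ℝ) ^ s := by ring
    _ = ((E.card : ℝ) * ∑ y : Fin κ → Fin q, P y) * (q:ℝ) ^ s := by rw [key]
    _ = ((E.card : ℝ) * (q:ℝ) ^ s) * ∑ y : Fin κ → Fin q, P y := by ring
    _ = ((q:ℝ) ^ tt) * ∑ y : Fin κ → Fin q, P y := by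
        have h2 : ((E.card : ℝ)) * (q:ℝ) ^ s = (q:ℝ) ^ tt := by exact_mod_cast hcardE
        rw [h2]
    _ = (∑ y : Fin κ → Fin q, P y) * (q:ℝ) ^ tt := by ring

open Finset in
lemma row_sum_eq {q ν t R κ : ℕ} (hq0 : 0 < q) (ht0 : 0 < t) (htν : t ≤ ν)
    (M : Fin R → Fin (ν - t) → Fin q) {st : ℕ} (hOA : IsOA R (ν - t) q st M)
    (hstw : st ≤ ν - t) (hκs : min κ (ν - t) ≤ st)
    (P : (Fin κ → Fin q) → ℝ) (hbalP : BalancedTwise q t P) (htκ : t ≤ κ)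
    (g : Fin κ → Fin ν) (hg : Function.Injective g)
    (z : Fin κ → Fin q) (u : Fin (ν - t) → Fin q) :
    (∑ r : Fin R, P (fun p =>
        if h : (g p : ℕ) < ν - t then z p + (M r ⟨g p, h⟩ - u ⟨g p, h⟩) else z p))
      * (q : ℝ) ^ κ = (R : ℝ) * ∑ y : Fin κ → Fin q, P y := by
  classical
  haveI : NeZero q := ⟨hq0.ne'⟩
  set S : Finset (Fin κ) := univ.filter (fun p => (g p : ℕ) < ν - t) with hS
  set F : Finset (Fin κ) := univ.filter (fun p => ¬ ((g p : ℕ) < ν - t)) with hF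
  have hmemS : ∀ p, (g p : ℕ) < ν - t → p ∈ S := fun p h => mem_filter.mpr ⟨mem_univ _, h⟩
  set σ := S.orderEmbOfFin rfl with hσ
  set φ := F.orderEmbOfFin rfl with hφ
  have hsplit : S.card + F.card = κ := by
    rw [hS, hF, Finset.card_filter_add_card_filter_not, card_univ, Fintype.card_fin]
  have htF : F.card ≤ t := by
    have : F.card ≤ (univ : Finset (Fin t)).card := by
      apply Finset.card_le_card_of_injOn
        (fun p => (⟨(g p : ℕ) - (ν - t), by
          have h1 := (g p).isLt
          have h2 : ν - t + t = ν := Nat.sub_add_cancel htν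
          rcases Nat.lt_or_ge (g p : ℕ) (ν - t) with hc | hc
          · omega
          · omega⟩ : Fin t))
        (fun _ _ => mem_univ _)
      intro p₁ hp₁ p₂ hp₂ hpe
      simp only [hF, coe_filter, Set.mem_setOf_eq, mem_univ, true_and, not_lt] at hp₁ hp₂
      apply hg
      have h1 := congrArg Fin.val hpe
      simp only at h1
      have := (g p₁).isLt; have := (g p₂).isLt
      exact Fin.ext (by omega)
    simpa using this
  have hmemσ : ∀ a, σ a ∈ S := fun a => S.orderEmbOfFin_mem rfl a
  have hσcond : ∀ a, (g (σ a) : ℕ) < ν - t := fun a => (Finset.mem_filter.mp (hmemσ a)).2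
  set γa : Fin S.card → Fin (ν - t) := fun a => ⟨(g (σ a) : ℕ), hσcond a⟩ with hγa
  have hγinj : Function.Injective γa := by
    intro a₁ a₂ h
    rw [hγa] at h
    simp only [Fin.mk.injEq] at h
    exact σ.injective (hg (Fin.ext h))
  have hScard : S.card ≤ st := le_trans (le_min (by
      simpa using Finset.card_le_card (Finset.subset_univ S))
    (by simpa using Fintype.card_le_of_injective γa hγinj)) hκs
  set τ : (p : Fin κ) → (g p : ℕ) < ν - t → Fin S.card :=
    fun p h => (S.orderIsoOfFin rfl).symm ⟨p, hmemS p h⟩ with hτ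
  have hτσ : ∀ (p : Fin κ) (h : (g p : ℕ) < ν - t), σ (τ p h) = p := by
    intro p h
    rw [hτ, hσ]
    rw [← Finset.coe_orderIsoOfFin_apply, OrderIso.apply_symm_apply]
  have hστ : ∀ a, τ (σ a) (hσcond a) = a :=
    fun a => σ.injective (hτσ (σ a) (hσcond a))
  set Y : (Fin S.card → Fin q) → Fin κ → Fin q := fun b p =>
    if h : (g p : ℕ) < ν - t then z p + (b (τ p h) - u ⟨g p, h⟩) else z p with hY
  have hYpos : ∀ b p (h : (g p : ℕ) < ν - t),
      Y b p = z p + (b (τ p h) - u ⟨g p, h⟩) := fun b p h => dif_pos h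
  have hYneg : ∀ b p, ¬ ((g p : ℕ) < ν - t) → Y b p = z p := fun b p h => dif_neg h
  have hγτ : ∀ (p : Fin κ) (h : (g p : ℕ) < ν - t), γa (τ p h) = ⟨(g p : ℕ), h⟩ := by
    intro p h
    apply Fin.ext
    exact congrArg (fun x => (g x : ℕ)) (hτσ p h)
  have hYσ : ∀ b a, Y b (σ a) = z (σ a) + (b a - u (γa a)) := by
    intro b a
    rw [hYpos b (σ a) (hσcond a), hστ a]
  have hφcond : ∀ a, ¬ ((g (φ a) : ℕ) < ν - t) :=
    fun a => (Finset.mem_filter.mp (F.orderEmbOfFin_mem rfl a)).2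
  have hYφ : ∀ b a, Y b (φ a) = z (φ a) := fun b a => hYneg b (φ a) (hφcond a)
  -- step 0: rows give Y
  have hrow : ∀ r : Fin R, (fun p =>
      if h : (g p : ℕ) < ν - t then z p + (M r ⟨g p, h⟩ - u ⟨g p, h⟩) else z p)
      = Y (fun a => M r (γa a)) := by
    intro r
    funext p
    by_cases h : (g p : ℕ) < ν - t
    · rw [dif_pos h, hYpos (fun a => M r (γa a)) p h, hγτ p h]
    · rw [dif_neg h, hYneg (fun a => M r (γa a)) p h]
  -- step 1: group rows
  have hinner : ∀ b : Fin S.card → Fin q,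
      ∑ r ∈ univ.filter (fun r : Fin R => (fun a => M r (γa a)) = b),
        P (Y (fun a => M r (γa a)))
      = ∑ _r ∈ univ.filter (fun r : Fin R => ∀ a, M r (γa a) = b a), P (Y b) := by
    intro b
    apply Finset.sum_congr
    · apply Finset.filter_congr; intro r _; simp [funext_iff]
    · intro r hr
      rw [mem_filter] at hr
      rw [show (fun a => M r (γa a)) = b from funext hr.2]
  have hstep1 : (∑ r : Fin R, P (Y (fun a => M r (γa a)))) * (q : ℝ) ^ S.card
      = (R : ℝ) * ∑ b : Fin S.card → Fin q, P (Y b) := by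
    have hgrp : ∑ r : Fin R, P (Y (fun a => M r (γa a)))
        = ∑ b ∈ (univ : Finset (Fin S.card → Fin q)),
            (((univ : Finset (Fin R)).filter (fun r => ∀ a, M r (γa a) = b a)).card : ℝ)
              * P (Y b) := by
      rw [← Finset.sum_fiberwise_of_maps_to (g := fun r : Fin R => fun a => M r (γa a))
        (t := (univ : Finset (Fin S.card → Fin q))) (fun r _ => mem_univ _)
        (fun r => P (Y (fun a => M r (γa a))))]
      apply Finset.sum_congr rfl
      intro b _
      rw [hinner b, Finset.sum_const, nsmul_eq_mul]
    rw [hgrp, Finset.sum_mul, Finset.mul_sum]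
    apply Finset.sum_congr rfl
    intro b _
    have hc := oa_reduce hq0 hOA hScard hstw γa hγinj b
    calc (((univ : Finset (Fin R)).filter (fun r => ∀ a, M r (γa a) = b a)).card : ℝ)
          * P (Y b) * (q : ℝ) ^ S.card
        = ((((univ : Finset (Fin R)).filter (fun r => ∀ a, M r (γa a) = b a)).card
            * q ^ S.card : ℕ) : ℝ) * P (Y b) := by push_cast; ring
      _ = (R : ℝ) * P (Y b) := by rw [hc]
  -- step 2: sum over b equals sum over slice
  have hstep2 : ∑ b : Fin S.card → Fin q, P (Y b)
      = ∑ y ∈ univ.filter (fun y : Fin κ → Fin q => ∀ a, y (φ a) = z (φ a)), P y := by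
    apply Finset.sum_nbij' (i := Y) (j := fun y a => y (σ a) + (u (γa a) - z (σ a)))
    · intro b _
      simp only [mem_filter, mem_univ, true_and]
      intro a; exact hYφ b a
    · intro y _; exact mem_univ _
    · intro b _
      funext a
      rw [hYσ]
      abel
    · intro y hy
      simp only [mem_filter, mem_univ, true_and] at hy
      funext p
      by_cases h : (g p : ℕ) < ν - t
      · rw [hYpos (fun a => y (σ a) + (u (γa a) - z (σ a))) p h, hγτ p h, hτσ p h]
        abel
      · rw [hYneg (fun a => y (σ a) + (u (γa a) - z (σ a))) p h]
        have hpF : p ∈ F := by rw [hF, mem_filter]; exact ⟨mem_univ _, h⟩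
        have : p ∈ Set.range φ := by rw [hφ, Finset.range_orderEmbOfFin]; exact hpF
        obtain ⟨a, ha⟩ := this
        rw [← ha]; exact (hy a).symm
    · intro b _; rfl
  -- step 3: slice sum via balancedness
  have hstep3 : (∑ y ∈ univ.filter (fun y : Fin κ → Fin q => ∀ a, y (φ a) = z (φ a)), P y)
      * (q : ℝ) ^ F.card = ∑ y : Fin κ → Fin q, P y :=
    balanced_reduce hq0 hbalP htF htκ φ φ.injective _
  have hpow : (q : ℝ) ^ κ = (q : ℝ) ^ S.card * (q : ℝ) ^ F.card := by
    rw [← pow_add, hsplit]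
  calc (∑ r : Fin R, P (fun p =>
        if h : (g p : ℕ) < ν - t then z p + (M r ⟨g p, h⟩ - u ⟨g p, h⟩) else z p)) * (q : ℝ) ^ κ
      = (∑ r : Fin R, P (Y (fun a => M r (γa a)))) * ((q:ℝ) ^ S.card * (q:ℝ) ^ F.card) := by
        rw [← hpow]
        congr 1
        exact Finset.sum_congr rfl (fun r _ => by rw [hrow r])
    _ = ((∑ r : Fin R, P (Y (fun a => M r (γa a)))) * (q:ℝ) ^ S.card) * (q:ℝ) ^ F.card := by ring
    _ = ((R : ℝ) * ∑ b : Fin S.card → Fin q, P (Y b)) * (q:ℝ) ^ F.card := by rw [hstep1]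
    _ = (R : ℝ) * ((∑ y ∈ univ.filter (fun y : Fin κ → Fin q => ∀ a, y (φ a) = z (φ a)), P y)
          * (q:ℝ) ^ F.card) := by rw [hstep2]; ring
    _ = (R : ℝ) * ∑ y : Fin κ → Fin q, P y := by rw [hstep3]

open Finset in
/-- Let `q ≥ 2`, `k ≥ 2`, `t ∈ {1, ..., k−1}`, and let `I` be a
maximization instance of `k CSP-q` with `opt(I) ≠ wor(I)` in which every constraint
function has arity at least `t` and is balanced `t`-wise independent, and which admits a
strong coloring with `ν ≥ k` colors. If there is an orthogonal array
`OA(R, ν−t, q, min k (ν−t))` in which some word of `Σ_q^{ν−t}` occurs as a row exactly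
`R* > 0` times, then `E[v(I,X)] ≥ (R*/R)·opt(I) + (1 − R*/R)·wor(I)`. -/
theorem avg_diff_ratio_of_balanced_twise
    (q k t n ν R Rstar : ℕ) (hq : 2 ≤ q) (hk : 2 ≤ k) (ht1 : 1 ≤ t) (htk : t ≤ k - 1)
    (hνk : k ≤ ν)
    (I : CSPInstance q k n) (hne : I.opt ≠ I.wor)
    (hbal : ∀ i : Fin I.m, t ≤ I.arity i ∧ BalancedTwise q t (I.P i))
    (hcol : I.StrongColoring ν)
    (M : Fin R → Fin (ν - t) → Fin q) (hOA : IsOA R (ν - t) q (min k (ν - t)) M)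
    (u : Fin (ν - t) → Fin q)
    (hu : (Finset.univ.filter fun r => M r = u).card = Rstar)
    (hRs : 0 < Rstar) :
    (Rstar : ℝ) / R * I.opt + (1 - (Rstar : ℝ) / R) * I.wor ≤ I.avg := by
  classical
  have hq0 : 0 < q := by omega
  haveI : NeZero q := ⟨hq0.ne'⟩
  have htν : t ≤ ν := by omega
  obtain ⟨col, hcolinj⟩ := hcol
  -- R, Rstar basics
  have hRR : Rstar ≤ R := by
    rw [← hu]
    exact le_trans (Finset.card_filter_le _ _) (by simp)
  have hR0 : 0 < R := lt_of_lt_of_le hRs hRR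
  have hRpos : (0 : ℝ) < R := by exact_mod_cast hR0
  -- opt attained; bounds
  have hnerange : (Set.range I.value).Nonempty := ⟨I.value (fun _ => ⟨0, hq0⟩), ⟨_, rfl⟩⟩
  have hfin : (Set.range I.value).Finite := Set.finite_range _
  have hoptmem : I.opt ∈ Set.range I.value := hnerange.csSup_mem hfin
  obtain ⟨xopt, hxopt⟩ := hoptmem
  have hwor_le : ∀ x, I.wor ≤ I.value x := fun x => csInf_le hfin.bddBelow ⟨x, rfl⟩
  have hle_opt : ∀ x, I.value x ≤ I.opt := fun x => le_csSup hfin.bddAbove ⟨x, rfl⟩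
  -- the solutions
  set xsol : Fin R → Fin n → Fin q := fun r j =>
    if h : (col j : ℕ) < ν - t then xopt j + (M r ⟨col j, h⟩ - u ⟨col j, h⟩) else xopt j
    with hxsol
  have hxu : ∀ r : Fin R, M r = u → xsol r = xopt := by
    intro r hr
    funext j
    rw [hxsol]
    simp only
    split
    · rw [hr]; simp
    · rfl
  -- per-constraint row-sum identity
  have keyA : ∀ i : Fin I.m,
      (∑ r : Fin R, I.P i (fun p => xsol r (I.idx i p))) * (q : ℝ) ^ (I.arity i)
        = (R : ℝ) * ∑ y : Fin (I.arity i) → Fin q, I.P i y := by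
    intro i
    have hgi : Function.Injective (fun p : Fin (I.arity i) => col (I.idx i p)) := hcolinj i
    have hκs : min (I.arity i) (ν - t) ≤ min k (ν - t) :=
      min_le_min (I.arity_le i) le_rfl
    have := row_sum_eq hq0 ht1 htν M hOA (min_le_right _ _) hκs
      (I.P i) (hbal i).2 (hbal i).1 (fun p => col (I.idx i p)) hgi
      (fun p => xopt (I.idx i p)) u
    convert this using 3
  -- per-constraint full-cube identity
  have keyE : ∀ i : Fin I.m,
      (∑ x : Fin n → Fin q, I.P i (fun p => x (I.idx i p))) * (q : ℝ) ^ (I.arity i)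
        = (q : ℝ) ^ n * ∑ y : Fin (I.arity i) → Fin q, I.P i y := by
    intro i
    have hinner : ∀ y : Fin (I.arity i) → Fin q,
        ∑ x ∈ (univ : Finset (Fin n → Fin q)).filter
            (fun x => (fun p => x (I.idx i p)) = y), I.P i (fun p => x (I.idx i p))
        = ∑ _x ∈ (univ : Finset (Fin n → Fin q)).filter
            (fun x => ∀ p, x (I.idx i p) = y p), I.P i y := by
      intro y
      apply Finset.sum_congr
      · apply Finset.filter_congr; intro x _; simp [funext_iff]
      · intro x hx
        rw [mem_filter] at hx
        rw [show (fun p => x (I.idx i p)) = y from funext hx.2]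
    have hgrp : ∑ x : Fin n → Fin q, I.P i (fun p => x (I.idx i p))
        = ∑ y ∈ (univ : Finset (Fin (I.arity i) → Fin q)),
            (((univ : Finset (Fin n → Fin q)).filter
              (fun x => ∀ p, x (I.idx i p) = y p)).card : ℝ) * I.P i y := by
      rw [← Finset.sum_fiberwise_of_maps_to (g := fun x : Fin n → Fin q => fun p => x (I.idx i p))
        (t := (univ : Finset (Fin (I.arity i) → Fin q))) (fun x _ => mem_univ _)
        (fun x => I.P i (fun p => x (I.idx i p)))]
      apply Finset.sum_congr rfl
      intro y _
      rw [hinner y, Finset.sum_const, nsmul_eq_mul]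
    rw [hgrp, Finset.sum_mul, Finset.mul_sum]
    apply Finset.sum_congr rfl
    intro y _
    have hc := ext_count hq0 (I.idx i) (I.idx_mono i).injective y
    calc (((univ : Finset (Fin n → Fin q)).filter
            (fun x => ∀ p, x (I.idx i p) = y p)).card : ℝ) * I.P i y * (q : ℝ) ^ (I.arity i)
        = ((((univ : Finset (Fin n → Fin q)).filter
            (fun x => ∀ p, x (I.idx i p) = y p)).card * q ^ (I.arity i) : ℕ) : ℝ) * I.P i y := by
          push_cast; ring
      _ = (q : ℝ) ^ n * I.P i y := by rw [hc]; push_cast; ring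
  -- global identity
  have hqpow : ∀ a : ℕ, ((q : ℝ) ^ a) ≠ 0 := fun a => by positivity
  have h1 : ∀ i : Fin I.m, ∑ r : Fin R, I.P i (fun p => xsol r (I.idx i p))
      = (R : ℝ) * ((∑ y : Fin (I.arity i) → Fin q, I.P i y) / (q : ℝ) ^ (I.arity i)) := by
    intro i
    rw [← mul_div_assoc, eq_div_iff (hqpow _)]
    exact keyA i
  have h2 : ∀ i : Fin I.m, (∑ x : Fin n → Fin q, I.P i (fun p => x (I.idx i p))) / (q : ℝ) ^ n
      = (∑ y : Fin (I.arity i) → Fin q, I.P i y) / (q : ℝ) ^ (I.arity i) := by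
    intro i
    rw [div_eq_div_iff (hqpow _) (hqpow _)]
    calc (∑ x : Fin n → Fin q, I.P i (fun p => x (I.idx i p))) * (q : ℝ) ^ (I.arity i)
        = (q : ℝ) ^ n * ∑ y : Fin (I.arity i) → Fin q, I.P i y := keyE i
      _ = (∑ y : Fin (I.arity i) → Fin q, I.P i y) * (q : ℝ) ^ n := by ring
  have havg : (R : ℝ) * I.avg = ∑ r : Fin R, I.value (xsol r) := by
    have e1 : I.avg = ∑ i : Fin I.m, I.w i
        * ((∑ y : Fin (I.arity i) → Fin q, I.P i y) / (q : ℝ) ^ (I.arity i)) := by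
      have hswap : ∑ x : Fin n → Fin q, I.value x
          = ∑ i : Fin I.m, I.w i * ∑ x : Fin n → Fin q, I.P i (fun p => x (I.idx i p)) := by
        simp only [CSPInstance.value]
        rw [Finset.sum_comm]
        exact Finset.sum_congr rfl (fun i _ => by rw [Finset.mul_sum])
      rw [CSPInstance.avg, hswap, Finset.sum_div]
      exact Finset.sum_congr rfl (fun i _ => by rw [mul_div_assoc, h2 i])
    have e2 : ∑ r : Fin R, I.value (xsol r)
        = ∑ i : Fin I.m, I.w i * ∑ r : Fin R, I.P i (fun p => xsol r (I.idx i p)) := by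
      simp only [CSPInstance.value]
      rw [Finset.sum_comm]
      exact Finset.sum_congr rfl (fun i _ => by rw [Finset.mul_sum])
    rw [e1, e2, Finset.mul_sum]
    apply Finset.sum_congr rfl
    intro i _
    rw [h1 i]
    ring
  -- split rows
  have hsplitsum : ∑ r : Fin R, I.value (xsol r)
      ≥ (Rstar : ℝ) * I.opt + ((R : ℝ) - Rstar) * I.wor := by
    rw [← Finset.sum_filter_add_sum_filter_not (univ : Finset (Fin R)) (fun r => M r = u)]
    have hA : ∑ r ∈ univ.filter (fun r : Fin R => M r = u), I.value (xsol r)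
        = (Rstar : ℝ) * I.opt := by
      have hc : ∀ r ∈ univ.filter (fun r : Fin R => M r = u), I.value (xsol r) = I.opt :=
        fun r hr => by rw [hxu r (mem_filter.mp hr).2, hxopt]
      rw [Finset.sum_congr rfl hc, Finset.sum_const, nsmul_eq_mul, hu]
    have hcards : (univ.filter (fun r : Fin R => ¬ (M r = u))).card = R - Rstar := by
      have := Finset.card_filter_add_card_filter_not
        (s := (univ : Finset (Fin R))) (p := fun r => M r = u)
      rw [hu, card_univ, Fintype.card_fin] at this
      omega
    have hB : ∑ r ∈ univ.filter (fun r : Fin R => ¬ (M r = u)), I.value (xsol r)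
        ≥ ((R : ℝ) - Rstar) * I.wor := by
      have := Finset.card_nsmul_le_sum (univ.filter (fun r : Fin R => ¬ (M r = u)))
        (fun r => I.value (xsol r)) I.wor (fun r _ => hwor_le _)
      rw [hcards, nsmul_eq_mul] at this
      have hcast : ((R - Rstar : ℕ) : ℝ) = (R : ℝ) - Rstar := by
        rw [Nat.cast_sub hRR]
      rw [hcast] at this
      exact this
    rw [hA]
    linarith
  -- finish
  have hfinal : (Rstar : ℝ) * I.opt + ((R : ℝ) - Rstar) * I.wor ≤ (R : ℝ) * I.avg := by
    rw [havg]; exact hsplitsum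
  rw [show (Rstar : ℝ) / R * I.opt + (1 - (Rstar : ℝ) / R) * I.wor
      = ((Rstar : ℝ) * I.opt + ((R : ℝ) - Rstar) * I.wor) / R from by
    field_simp]
  rw [div_le_iff₀ hRpos]
  calc (Rstar : ℝ) * I.opt + ((R : ℝ) - Rstar) * I.wor ≤ (R : ℝ) * I.avg := hfinal
    _ = I.avg * R := by ring
end

section
/- Let q ≥ 2, k ≥ 2 and d > q be integers and let I be a maximization instance of k CSP-q with n variables and opt(I) ≠ wor(I). For a tuple π = (π_1,...,π_n) of surjective maps Σ_d → Σ_q, let f_π(I) denote the maximization instance of k CSP-d with n variables, the same weights w_i and index tuples J_i as I, and constraint functions (z_{i_1},...,z_{i_{k_i}}) ↦ P_i(π_{i_1}(z_{i_1}),...,π_{i_{k_i}}(z_{i_{k_i}})). Then there exists a tuple π of surjections Σ_d → Σ_q such that opt(f_π(I)) = opt(I), wor(f_π(I)) = wor(I), and E[v(f_π(I),Z)] ≤ E[v(I,X)] (Z uniform on Σ_d^n, X uniform on Σ_q^n); consequently the average differential ratio of I is at least the average differential ratio of f_π(I). -/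
/-- The instance `f_π(I)` of `k CSP-d` obtained from an instance `I` of `k CSP-q` and a
tuple `π` of maps `Σ_d → Σ_q`: same weights and index tuples, with constraint functions
`(z_{i_1}, ..., z_{i_{k_i}}) ↦ P_i (π_{i_1}(z_{i_1}), ..., π_{i_{k_i}}(z_{i_{k_i}}))`. -/
def CSPInstance.pullback {q k n : ℕ} (d : ℕ) (I : CSPInstance q k n)
    (π : Fin n → Fin d → Fin q) : CSPInstance d k n where
  m := I.m
  w := I.w
  w_pos := I.w_pos
  arity := I.arity
  arity_le := I.arity_le
  idx := I.idx
  idx_mono := I.idx_mono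
  P := fun i z => I.P i fun s => π (I.idx i s) (z s)


/-- Single-coordinate map: `z ↦ z` on the first `q` values, else the default `a`. -/
def cmap (q d : ℕ) (a : Fin q) (z : Fin d) : Fin q :=
  if h : z.val < q then ⟨z.val, h⟩ else a

lemma cmap_surjective (q d : ℕ) (hd : q < d) (a : Fin q) :
    Function.Surjective (cmap q d a) := by
  intro x
  exact ⟨⟨x.val, x.isLt.trans hd⟩, by simp [cmap, x.isLt]⟩

/-- Second component of the rearranging map. -/
def rmap (q d : ℕ) (hd : q < d) (a : Fin q) (z : Fin d) : Fin d :=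
  if _ : z.val < q then ⟨a.val, a.isLt.trans hd⟩ else z

/-- The rearranging equivalence, applied pointwise on tuples. -/
def Emap (q d n : ℕ) (hd : q < d) :
    ((Fin n → Fin q) × (Fin n → Fin d)) ≃ ((Fin n → Fin q) × (Fin n → Fin d)) where
  toFun p := (fun j => cmap q d (p.1 j) (p.2 j), fun j => rmap q d hd (p.1 j) (p.2 j))
  invFun p := (fun j => if h : (p.2 j).val < q then ⟨(p.2 j).val, h⟩ else p.1 j,
    fun j => if _ : (p.2 j).val < q then ⟨(p.1 j).val, (p.1 j).isLt.trans hd⟩ else p.2 j)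
  left_inv := by
    rintro ⟨a, z⟩
    refine Prod.ext (funext fun j => ?_) (funext fun j => ?_) <;>
    · by_cases h : (z j).val < q <;> simp [cmap, rmap, h, (a j).isLt]
  right_inv := by
    rintro ⟨x, w⟩
    refine Prod.ext (funext fun j => ?_) (funext fun j => ?_) <;>
    · by_cases h : (w j).val < q <;> simp [cmap, rmap, h, (x j).isLt]

lemma key_sum (q d n : ℕ) (hd : q < d) (F : (Fin n → Fin q) → ℝ) :
    ∑ a : Fin n → Fin q, ∑ z : Fin n → Fin d,
        F (fun j => cmap q d (a j) (z j))
      = (d : ℝ) ^ n * ∑ x : Fin n → Fin q, F x := by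
  calc ∑ a : Fin n → Fin q, ∑ z : Fin n → Fin d, F (fun j => cmap q d (a j) (z j))
      = ∑ p : (Fin n → Fin q) × (Fin n → Fin d), F ((Emap q d n hd p).1) :=
        (Fintype.sum_prod_type (f := fun p => F ((Emap q d n hd p).1))).symm
    _ = ∑ p : (Fin n → Fin q) × (Fin n → Fin d), F p.1 :=
        Equiv.sum_comp (Emap q d n hd) (fun p => F p.1)
    _ = (d : ℝ) ^ n * ∑ x : Fin n → Fin q, F x := by
        rw [Fintype.sum_prod_type]
        simp only [Finset.sum_const, Finset.card_univ, Fintype.card_fun, Fintype.card_fin,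
          nsmul_eq_mul, Nat.cast_pow]
        rw [← Finset.mul_sum]

/-- Let `q ≥ 2`, `k ≥ 2`, `d > q`, and let `I` be a maximization instance
of `k CSP-q` with `n` variables and `opt(I) ≠ wor(I)`. Then there is a tuple `π` of
surjections `Σ_d → Σ_q` such that `opt(f_π(I)) = opt(I)`, `wor(f_π(I)) = wor(I)` and
`E[v(f_π(I),Z)] ≤ E[v(I,X)]`; consequently the average differential ratio of `I` is at
least the average differential ratio of `f_π(I)`. -/
theorem avg_diff_ratio_alphabet_extension
    (q k d n : ℕ) (hq : 2 ≤ q) (hk : 2 ≤ k) (hd : q < d)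
    (I : CSPInstance q k n) (hne : I.opt ≠ I.wor) :
    ∃ π : Fin n → Fin d → Fin q, (∀ j, Function.Surjective (π j)) ∧
      (I.pullback d π).opt = I.opt ∧ (I.pullback d π).wor = I.wor ∧
      (I.pullback d π).avg ≤ I.avg ∧
      ((I.pullback d π).avg - (I.pullback d π).wor) /
          ((I.pullback d π).opt - (I.pullback d π).wor) ≤
        (I.avg - I.wor) / (I.opt - I.wor) := by

  classical
  haveI : Nonempty (Fin q) := ⟨⟨0, by omega⟩⟩
  haveI : Nonempty (Fin n → Fin q) := ⟨fun _ => Classical.arbitrary _⟩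
  have hq0 : (0:ℝ) < (q:ℝ) ^ n := by positivity
  have hd0 : (0:ℝ) < (d:ℝ) ^ n := by
    have : (0:ℝ) < (d:ℝ) := by exact_mod_cast Nat.pos_of_ne_zero (by omega)
    positivity
  -- range of the pullback's value function equals range of I.value, for every a
  have hrange : ∀ a : Fin n → Fin q,
      Set.range (I.pullback d fun j => cmap q d (a j)).value = Set.range I.value := by
    intro a
    have hg : Function.Surjective
        (fun (z : Fin n → Fin d) (j : Fin n) => cmap q d (a j) (z j)) := by
      intro x
      exact ⟨fun j => (cmap_surjective q d hd (a j) (x j)).choose,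
        funext fun j => (cmap_surjective q d hd (a j) (x j)).choose_spec⟩
    have hcomp : (I.pullback d fun j => cmap q d (a j)).value
        = I.value ∘ (fun (z : Fin n → Fin d) (j : Fin n) => cmap q d (a j) (z j)) := rfl
    rw [hcomp, Set.range_comp, hg.range_eq, Set.image_univ]
  -- the average over a of the pullback averages equals I.avg
  have havg : ∑ a : Fin n → Fin q, (I.pullback d fun j => cmap q d (a j)).avg
      = (q:ℝ) ^ n * I.avg := by
    have h1 : ∀ a : Fin n → Fin q, (I.pullback d fun j => cmap q d (a j)).avg
        = (∑ z : Fin n → Fin d, I.value (fun j => cmap q d (a j) (z j))) / (d:ℝ) ^ n :=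
      fun a => rfl
    simp only [h1]
    rw [← Finset.sum_div, key_sum q d n hd I.value, CSPInstance.avg]
    field_simp
  -- pick a good a
  obtain ⟨a, -, ha⟩ : ∃ a ∈ (Finset.univ : Finset (Fin n → Fin q)),
      (I.pullback d fun j => cmap q d (a j)).avg ≤ I.avg := by
    apply Finset.exists_le_of_sum_le Finset.univ_nonempty
    rw [havg, Finset.sum_const, Finset.card_univ, nsmul_eq_mul]
    simp [Fintype.card_fun]
  have hopt : (I.pullback d fun j => cmap q d (a j)).opt = I.opt := by
    unfold CSPInstance.opt; rw [hrange a]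
  have hwor : (I.pullback d fun j => cmap q d (a j)).wor = I.wor := by
    unfold CSPInstance.wor; rw [hrange a]
  have hfin : (Set.range I.value).Finite := Set.finite_range _
  have hlt : I.wor < I.opt :=
    lt_of_le_of_ne (csInf_le_csSup (Set.range_nonempty _) hfin.bddBelow hfin.bddAbove)
      (Ne.symm hne)
  refine ⟨fun j => cmap q d (a j), fun j => cmap_surjective q d hd (a j),
    hopt, hwor, ha, ?_⟩
  rw [hopt, hwor]
  have hpos : (0:ℝ) < I.opt - I.wor := sub_pos.mpr hlt
  gcongr
end

section
/- For all integers q ≥ 2, t ≥ 1 and ν > t, the following chain of inequalities holds: E(ν,q,t) ≤ F(ν−1,q,t) ≤ F(ν,q,t+1)/q ≤ E(ν,q,t+1). Moreover, when q = 2 and t is even, all of these are equalities: E(ν,2,t) = F(ν−1,2,t) = F(ν,2,t+1)/2 = E(ν,2,t+1). -/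
/-- `F(ν, q, t)`: the minimum number of rows of an orthogonal array of strength `t` with
`ν` columns and entries in `Σ_q`. -/
noncomputable def Fnum (ν q t : ℕ) : ℕ :=
  sInf {R | 0 < R ∧ ∃ M : Fin R → Fin ν → Fin q, IsOA R ν q t M}

/-- `E(ν, q, t)`: the minimum number of rows of a difference scheme of strength `t` with
`ν` columns based on `(ℤ_q, +)`. -/
noncomputable def Enum (ν q t : ℕ) : ℕ :=
  sInf {R | 0 < R ∧ ∃ M : Fin R → Fin ν → Fin q, IsDS R ν q t M}

section ChainHelpers
open Finset

variable {R ν q : ℕ}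

def cntOA (M : Fin R → Fin ν → Fin q) {k : ℕ} (c : Fin k → Fin ν) (v : Fin k → Fin q) : ℕ :=
  (Finset.univ.filter fun r => ∀ s, M r (c s) = v s).card

def cntDS (M : Fin R → Fin ν → Fin q) {k : ℕ} (c : Fin k → Fin ν) (v : Fin k → Fin q) : ℕ :=
  (Finset.univ.filter fun r => ∃ a : Fin q, ∀ s, M r (c s) = v s + a).card


lemma cntOA_comp_perm (M : Fin R → Fin ν → Fin q) {k : ℕ} (c : Fin k → Fin ν)
    (v : Fin k → Fin q) (σ : Equiv.Perm (Fin k)) :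
    cntOA M (c ∘ σ) (v ∘ σ) = cntOA M c v := by
  unfold cntOA
  congr 1
  apply Finset.filter_congr
  intro r _
  simp only [Function.comp, eq_iff_iff]
  exact ⟨fun h s => by simpa using h (σ.symm s), fun h s => h _⟩

lemma cntDS_comp_perm (M : Fin R → Fin ν → Fin q) {k : ℕ} (c : Fin k → Fin ν)
    (v : Fin k → Fin q) (σ : Equiv.Perm (Fin k)) :
    cntDS M (c ∘ σ) (v ∘ σ) = cntDS M c v := by
  unfold cntDS
  congr 1
  apply Finset.filter_congr
  intro r _
  simp only [Function.comp, eq_iff_iff]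
  constructor
  · rintro ⟨a, h⟩; exact ⟨a, fun s => by simpa using h (σ.symm s)⟩
  · rintro ⟨a, h⟩; exact ⟨a, fun s => h _⟩

-- snoc injective
lemma snoc_inj {k : ℕ} {c : Fin k → Fin ν} (hc : Function.Injective c) {d : Fin ν}
    (hd : ∀ s, c s ≠ d) : Function.Injective (Fin.snoc c d : Fin (k+1) → Fin ν) := by
  intro i j hij
  induction i using Fin.lastCases with
  | last =>
    induction j using Fin.lastCases with
    | last => rfl
    | cast j =>
      rw [Fin.snoc_last, Fin.snoc_castSucc] at hij
      exact absurd hij.symm (hd j)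
  | cast i =>
    induction j using Fin.lastCases with
    | last =>
      rw [Fin.snoc_last, Fin.snoc_castSucc] at hij
      exact absurd hij (hd i)
    | cast j =>
      rw [Fin.snoc_castSucc, Fin.snoc_castSucc] at hij
      exact congrArg Fin.castSucc (hc hij)

lemma exists_notin {k : ℕ} (hk : k < ν) (c : Fin k → Fin ν) : ∃ d, ∀ s, c s ≠ d := by
  by_contra h
  push_neg at h
  have hsurj : Function.Surjective c := fun d => h d
  have := Fintype.card_le_of_surjective c hsurj
  simp only [Fintype.card_fin] at this
  omega

lemma cntOA_snoc_sum (M : Fin R → Fin ν → Fin q) {k : ℕ} (c : Fin k → Fin ν) (d : Fin ν)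
    (v : Fin k → Fin q) :
    cntOA M c v = ∑ w : Fin q, cntOA M (Fin.snoc c d) (Fin.snoc v w) := by
  unfold cntOA
  rw [Finset.card_eq_sum_card_fiberwise (f := fun r => M r d) (t := univ) (fun _ _ => mem_univ _)]
  refine Finset.sum_congr rfl fun w _ => ?_
  rw [Finset.filter_filter]
  congr 1
  ext r
  simp only [mem_filter, mem_univ, true_and, Fin.forall_fin_succ', Fin.snoc_castSucc,
    Fin.snoc_last]

lemma inj_drop (hq : 0 < q) {M : Fin R → Fin ν → Fin q} {k : ℕ} (hk : k < ν)
    (h : ∀ c : Fin (k+1) → Fin ν, Function.Injective c → ∀ v, cntOA M c v * q ^ (k+1) = R) :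
    ∀ c : Fin k → Fin ν, Function.Injective c → ∀ v, cntOA M c v * q ^ k = R := by
  intro c hc v
  obtain ⟨d, hd⟩ := exists_notin hk c
  have hinj : Function.Injective (Fin.snoc c d : Fin (k+1) → Fin ν) := snoc_inj hc hd
  have key : cntOA M c v * q ^ k * q = R * q := by
    calc cntOA M c v * q ^ k * q
        = (∑ w : Fin q, cntOA M (Fin.snoc c d) (Fin.snoc v w)) * q ^ (k+1) := by
          rw [← cntOA_snoc_sum M c d v, pow_succ]; ring
      _ = ∑ w : Fin q, cntOA M (Fin.snoc c d) (Fin.snoc v w) * q ^ (k+1) := by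
          rw [Finset.sum_mul]
      _ = ∑ _w : Fin q, R := by
          exact Finset.sum_congr rfl fun w _ => h _ hinj _
      _ = R * q := by simp [mul_comm]
  exact Nat.eq_of_mul_eq_mul_right hq key

-- strength reduction
lemma isOA_inj' {t : ℕ} {M : Fin R → Fin ν → Fin q} (h : IsOA R ν q t M)
    {c : Fin t → Fin ν} (hc : Function.Injective c) (v : Fin t → Fin q) :
    cntOA M c v * q ^ t = R := by
  set σ := Tuple.sort c with hσ
  have hmono : StrictMono (c ∘ σ) :=
    (Tuple.monotone_sort c).strictMono_of_injective (hc.comp σ.injective)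
  have := h (c ∘ σ) hmono (v ∘ σ)
  rw [← cntOA_comp_perm M c v σ]
  exact this

lemma isOA_strength {t : ℕ} (hq : 0 < q) {M : Fin R → Fin ν → Fin q} (h : IsOA R ν q t M)
    (htν : t ≤ ν) :
    ∀ k, k ≤ t → ∀ c : Fin k → Fin ν, Function.Injective c → ∀ v, cntOA M c v * q ^ k = R := by
  suffices H : ∀ e k, k + e = t →
      ∀ c : Fin k → Fin ν, Function.Injective c → ∀ v, cntOA M c v * q ^ k = R by
    intro k hk
    exact H (t - k) k (by omega)
  intro e
  induction e with
  | zero =>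
    intro k hk
    have : k = t := by omega
    subst this
    exact fun c hc v => isOA_inj' h hc v
  | succ e ih =>
    intro k hk
    exact inj_drop hq (by omega) (ih (k + 1) (by omega))

-- full factorial counting
lemma card_restrict {ν q k : ℕ} (c : Fin k → Fin ν) (hc : Function.Injective c)
    (v : Fin k → Fin q) (hk : k ≤ ν) :
    (Finset.univ.filter fun f : Fin ν → Fin q => ∀ s, f (c s) = v s).card * q ^ k = q ^ ν := by
  classical
  have e : {f : Fin ν → Fin q // ∀ s, f (c s) = v s} ≃ ({x : Fin ν // x ∉ Set.range c} → Fin q) :=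
  { toFun := fun f x => f.1 x.1
    invFun := fun g => ⟨fun x => if h : x ∈ Set.range c then v h.choose else g ⟨x, h⟩, by
      intro s
      have hmem : c s ∈ Set.range c := ⟨s, rfl⟩
      simp only [dif_pos hmem]
      congr 1
      exact hc hmem.choose_spec⟩
    left_inv := fun f => Subtype.ext (funext fun x => by
      by_cases h : x ∈ Set.range c
      · simp only [dif_pos h, ← f.2 h.choose, h.choose_spec]
      · simp only [dif_neg h])
    right_inv := fun g => funext fun x => by
      cases x with
      | mk x hx => simp only [dif_neg hx] }
  have h1 : (Finset.univ.filter fun f : Fin ν → Fin q => ∀ s, f (c s) = v s).card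
      = Fintype.card {f : Fin ν → Fin q // ∀ s, f (c s) = v s} :=
    (Fintype.card_subtype _).symm
  have hrange : Fintype.card {x : Fin ν // x ∈ Set.range c} = k := by
    rw [Fintype.card_congr (Equiv.ofInjective c hc).symm, Fintype.card_fin]
  have hcompl : Fintype.card {x : Fin ν // x ∉ Set.range c} = ν - k := by
    have h := Fintype.card_subtype_compl (fun x : Fin ν => x ∈ Set.range c)
    rw [h, hrange, Fintype.card_fin]
  have h2 : Fintype.card {f : Fin ν → Fin q // ∀ s, f (c s) = v s} = q ^ (ν - k) := by
    rw [Fintype.card_congr e, Fintype.card_fun, hcompl, Fintype.card_fin]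
  have hνk : ν - k + k = ν := Nat.sub_add_cancel hk
  rw [h1]
  rw [h2]
  rw [← pow_add]
  rw [hνk]

lemma exists_fullOA (q ν t : ℕ) (ht : t ≤ ν) :
    ∃ M : Fin (q ^ ν) → Fin ν → Fin q, IsOA (q ^ ν) ν q t M := by
  classical
  have hcard : Fintype.card (Fin ν → Fin q) = q ^ ν := by
    simp [Fintype.card_fun]
  let e : (Fin ν → Fin q) ≃ Fin (q ^ ν) := Fintype.equivFinOfCardEq hcard
  refine ⟨fun r j => e.symm r j, fun c hc v => ?_⟩
  have hb : (Finset.univ.filter fun r : Fin (q ^ ν) => ∀ s, e.symm r (c s) = v s).card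
      = (Finset.univ.filter fun f : Fin ν → Fin q => ∀ s, f (c s) = v s).card := by
    apply Finset.card_bij (fun r _ => e.symm r)
    · intro r hr
      simp only [mem_filter, mem_univ, true_and] at hr ⊢
      exact hr
    · intro a _ b _ hab
      exact e.symm.injective hab
    · intro f hf
      refine ⟨e f, ?_, by simp⟩
      simp only [mem_filter, mem_univ, true_and] at hf ⊢
      simpa using hf
  rw [hb]
  exact card_restrict c hc.injective v ht

-- splitting a coset count into exact counts
lemma cntDS_eq_sum [NeZero q] (M : Fin R → Fin ν → Fin q) {k : ℕ} (hk : 0 < k)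
    (c : Fin k → Fin ν) (v : Fin k → Fin q) :
    cntDS M c v = ∑ a : Fin q, cntOA M c (fun s => v s + a) := by
  classical
  unfold cntDS cntOA
  have i0 : Fin k := ⟨0, hk⟩
  rw [Finset.card_eq_sum_card_fiberwise (f := fun r => M r (c i0) - v i0) (t := univ)
    (fun _ _ => mem_univ _)]
  refine Finset.sum_congr rfl fun a _ => ?_
  rw [Finset.filter_filter]
  congr 1
  ext r
  simp only [mem_filter, mem_univ, true_and]
  constructor
  · rintro ⟨⟨b, hb⟩, hfib⟩ s
    have hba : b = a := by
      rw [hb i0] at hfib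
      simpa using hfib
    rw [← hba]
    exact hb s
  · intro h
    exact ⟨⟨a, h⟩, by rw [h i0]; simp⟩

lemma cntDS_of_OA [NeZero q] (hq : 0 < q) {t : ℕ} (ht : 0 < t) {M : Fin R → Fin ν → Fin q}
    (h : ∀ c : Fin t → Fin ν, Function.Injective c → ∀ v, cntOA M c v * q ^ t = R)
    {c : Fin t → Fin ν} (hc : Function.Injective c) (v : Fin t → Fin q) :
    cntDS M c v * q ^ (t - 1) = R := by
  have hsum := cntDS_eq_sum M ht c v
  have h2 : cntDS M c v * q ^ t = q * R := by
    rw [hsum, Finset.sum_mul]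
    rw [Finset.sum_congr rfl fun a _ => h c hc (fun s => v s + a)]
    simp [mul_comm]
  have hpow : q ^ (t - 1) * q = q ^ t := by
    rw [← pow_succ]
    congr 1
    omega
  have h3 : cntDS M c v * q ^ (t - 1) * q = R * q := by
    rw [mul_assoc, hpow, h2, mul_comm]
  exact Nat.eq_of_mul_eq_mul_right hq h3

lemma isDS_of_OA [NeZero q] (hq : 0 < q) {t : ℕ} (ht : 0 < t) {M : Fin R → Fin ν → Fin q}
    (h : IsOA R ν q t M) : IsDS R ν q t M := fun c hc v =>
  cntDS_of_OA hq ht (fun c' hc' v' => isOA_inj' h hc' v') hc.injective v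

lemma isDS_inj' {t : ℕ} {M : Fin R → Fin ν → Fin q} (h : IsDS R ν q t M)
    {c : Fin t → Fin ν} (hc : Function.Injective c) (v : Fin t → Fin q) :
    cntDS M c v * q ^ (t - 1) = R := by
  set σ := Tuple.sort c with hσ
  have hmono : StrictMono (c ∘ σ) :=
    (Tuple.monotone_sort c).strictMono_of_injective (hc.comp σ.injective)
  have := h (c ∘ σ) hmono (v ∘ σ)
  rw [← cntDS_comp_perm M c v σ]
  exact this

/-- Analysis of a `cntDS` count in an array with an appended zero column. -/
lemma snoc_cases {ν' k : ℕ} [NeZero q] (hk : 0 < k) (M : Fin R → Fin ν' → Fin q)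
    (c : Fin k → Fin (ν' + 1)) (hc : Function.Injective c) (v : Fin k → Fin q) :
    (∃ d : Fin (k - 1) → Fin ν', Function.Injective d ∧ ∃ w,
        cntDS (fun r => Fin.snoc (M r) 0) c v = cntOA M d w) ∨
    (∃ c' : Fin k → Fin ν', Function.Injective c' ∧
        cntDS (fun r => Fin.snoc (M r) 0) c v = cntDS M c' v) := by
  classical
  by_cases hlast : ∃ s0, c s0 = Fin.last ν'
  · left
    obtain ⟨k', rfl⟩ : ∃ k', k = k' + 1 := ⟨k - 1, by omega⟩
    obtain ⟨s0, hs0⟩ := hlast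
    have hne : ∀ j : Fin k', c (s0.succAbove j) ≠ Fin.last ν' := by
      intro j hj
      exact Fin.succAbove_ne s0 j (hc (hj.trans hs0.symm))
    set a0 : Fin q := -(v s0) with ha0
    refine ⟨fun j => (c (s0.succAbove j)).castPred (hne j), ?_, fun j => v (s0.succAbove j) + a0, ?_⟩
    · intro i j hij
      apply Fin.succAbove_right_injective (p := s0)
      apply hc
      have := congrArg Fin.castSucc hij
      rwa [Fin.castSucc_castPred, Fin.castSucc_castPred] at this
    · unfold cntDS cntOA
      congr 1
      ext r
      simp only [mem_filter, mem_univ, true_and]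
      constructor
      · rintro ⟨a, ha⟩ j
        have h0 : v s0 + a = 0 := by
          have := ha s0
          rw [hs0, Fin.snoc_last] at this
          exact this.symm
        have haa : a = a0 := by
          rw [ha0]
          exact eq_neg_of_add_eq_zero_right h0
        have := ha (s0.succAbove j)
        rw [← Fin.castSucc_castPred (c (s0.succAbove j)) (hne j), Fin.snoc_castSucc] at this
        rw [this, haa]
      · intro hM
        refine ⟨a0, fun s => ?_⟩
        by_cases hss : s = s0
        · subst hss
          rw [hs0, Fin.snoc_last, ha0, add_neg_cancel]
        · obtain ⟨j, rfl⟩ := Fin.exists_succAbove_eq hss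
          rw [← Fin.castSucc_castPred (c (Fin.succAbove s0 j)) (hne j), Fin.snoc_castSucc]
          exact hM j
  · right
    push_neg at hlast
    refine ⟨fun s => (c s).castPred (hlast s), ?_, ?_⟩
    · intro i j hij
      apply hc
      have := congrArg Fin.castSucc hij
      rwa [Fin.castSucc_castPred, Fin.castSucc_castPred] at this
    · unfold cntDS
      congr 1
      ext r
      simp only [mem_filter, mem_univ, true_and]
      constructor
      · rintro ⟨a, ha⟩
        refine ⟨a, fun s => ?_⟩
        have := ha s
        rwa [← Fin.castSucc_castPred (c s) (hlast s), Fin.snoc_castSucc] at this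
      · rintro ⟨a, ha⟩
        refine ⟨a, fun s => ?_⟩
        rw [← Fin.castSucc_castPred (c s) (hlast s), Fin.snoc_castSucc]
        exact ha s

/-- Appending a zero column to an OA of strength `t` gives a difference scheme. -/
lemma C1 [NeZero q] (hq : 0 < q) {t ν' : ℕ} (ht : 0 < t) {M : Fin R → Fin ν' → Fin q}
    (h : IsOA R ν' q t M) (htν : t ≤ ν') :
    IsDS R (ν' + 1) q t (fun r => Fin.snoc (M r) 0) := by
  intro c hc v
  have hstr := isOA_strength hq h htν
  rcases snoc_cases ht M c hc.injective v with ⟨d, hd, w, heq⟩ | ⟨c', hc', heq⟩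
  · show cntDS _ c v * q ^ (t - 1) = R
    rw [heq]
    exact hstr (t - 1) (by omega) d hd w
  · show cntDS _ c v * q ^ (t - 1) = R
    rw [heq]
    exact cntDS_of_OA hq ht (hstr t le_rfl) hc' v

/-- Restricting to the rows having 0 in the last column and deleting that column. -/
lemma C2 [NeZero q] {t ν' : ℕ} (hq : 0 < q) {M : Fin R → Fin (ν' + 1) → Fin q}
    (h : ∀ k, k ≤ t + 1 → ∀ c : Fin k → Fin (ν' + 1), Function.Injective c →
      ∀ v, cntOA M c v * q ^ k = R) :
    ∃ K, K * q = R ∧ ∃ N : Fin K → Fin ν' → Fin q, IsOA K ν' q t N := by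
  classical
  set S : Finset (Fin R) := univ.filter (fun r => M r (Fin.last ν') = 0) with hS
  have hinj1 : Function.Injective (fun _ : Fin 1 => Fin.last ν') := fun a b _ => Subsingleton.elim a b
  have hK : S.card * q = R := by
    have h1 := h 1 (by omega) (fun _ => Fin.last ν') hinj1 (fun _ => 0)
    have h2 : cntOA M (fun _ : Fin 1 => Fin.last ν') (fun _ => 0) = S.card := by
      unfold cntOA
      congr 1
      ext r
      simp [hS, Fin.forall_fin_one]
    rw [h2, pow_one] at h1
    exact h1
  refine ⟨S.card, hK, fun i j => M (S.equivFin.symm i) j.castSucc, ?_⟩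
  intro c hc v
  have hcard : (univ.filter fun i : Fin S.card =>
        ∀ s, M (S.equivFin.symm i) (c s).castSucc = v s).card
      = (univ.filter fun r : Fin R =>
          (∀ s, M r (c s).castSucc = v s) ∧ M r (Fin.last ν') = 0).card := by
    apply Finset.card_bij (fun i _ => (S.equivFin.symm i : Fin R))
    · intro i hi
      simp only [mem_filter, mem_univ, true_and] at hi ⊢
      refine ⟨hi, ?_⟩
      have h2 := (S.equivFin.symm i).2
      exact (mem_filter.mp h2).2
    · intro a _ b _ hab
      exact S.equivFin.symm.injective (Subtype.ext hab)
    · intro r hr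
      simp only [mem_filter, mem_univ, true_and] at hr
      have hrS : r ∈ S := by simp [hS, hr.2]
      refine ⟨S.equivFin ⟨r, hrS⟩, ?_, by simp⟩
      simp only [mem_filter, mem_univ, true_and, Equiv.symm_apply_apply]
      exact hr.1
  set d : Fin (t + 1) → Fin (ν' + 1) := Fin.snoc (fun s => (c s).castSucc) (Fin.last ν') with hd
  have hdinj : Function.Injective d := by
    apply snoc_inj
    · intro i j hij
      exact hc.injective (Fin.castSucc_injective _ hij)
    · intro s
      exact (Fin.castSucc_lt_last _).ne
  have h2 : (univ.filter fun r : Fin R =>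
        (∀ s, M r (c s).castSucc = v s) ∧ M r (Fin.last ν') = 0).card
      = cntOA M d (Fin.snoc v 0) := by
    unfold cntOA
    congr 1
    ext r
    simp [hd, Fin.forall_fin_succ', Fin.snoc_castSucc, Fin.snoc_last]
  have h3 := h (t + 1) le_rfl d hdinj (Fin.snoc v 0)
  have key : (univ.filter fun i : Fin S.card =>
      ∀ s, M (S.equivFin.symm i) (c s).castSucc = v s).card * q ^ t * q = S.card * q := by
    rw [hcard, h2]
    rw [mul_assoc, ← pow_succ]
    rw [h3, hK]
  exact Nat.eq_of_mul_eq_mul_right hq key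

/-- Developing a difference scheme into an orthogonal array. -/
lemma C3 [NeZero q] {t : ℕ} {M : Fin R → Fin ν → Fin q} (h : IsDS R ν q (t + 1) M) :
    IsOA (q * R) ν q (t + 1)
      (fun x j => M (finProdFinEquiv.symm x).2 j + (finProdFinEquiv.symm x).1) := by
  intro c hc v
  have hcard : (univ.filter fun x : Fin (q * R) =>
        ∀ s, M (finProdFinEquiv.symm x).2 (c s) + (finProdFinEquiv.symm x).1 = v s).card
      = (univ.filter fun p : Fin q × Fin R => ∀ s, M p.2 (c s) + p.1 = v s).card := by
    apply Finset.card_bij (fun x _ => finProdFinEquiv.symm x)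
    · intro x hx
      simp only [mem_filter, mem_univ, true_and] at hx ⊢
      exact hx
    · intro a _ b _ hab
      exact finProdFinEquiv.symm.injective hab
    · intro p hp
      simp only [mem_filter, mem_univ, true_and] at hp
      exact ⟨finProdFinEquiv p, by simpa only [mem_filter, mem_univ, true_and, Equiv.symm_apply_apply] using hp, Equiv.symm_apply_apply _ _⟩
  have hcard2 : (univ.filter fun p : Fin q × Fin R => ∀ s, M p.2 (c s) + p.1 = v s).card
      = cntDS M c v := by
    unfold cntDS
    apply Finset.card_bij (fun p _ => p.2)
    · intro p hp
      simp only [mem_filter, mem_univ, true_and] at hp ⊢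
      refine ⟨-p.1, fun s => ?_⟩
      rw [← hp s]
      abel
    · intro p hp p' hp' hpp
      simp only [mem_filter, mem_univ, true_and] at hp hp'
      have h1 := hp 0
      have h2 := hp' 0
      rw [hpp] at h1
      have : p.1 = p'.1 := by
        have := h1.trans h2.symm
        exact add_left_cancel this
      exact Prod.ext this hpp
    · intro r hr
      simp only [mem_filter, mem_univ, true_and] at hr
      obtain ⟨a, ha⟩ := hr
      refine ⟨(-a, r), ?_, rfl⟩
      simp only [mem_filter, mem_univ, true_and]
      intro s
      rw [ha s]
      abel
  rw [hcard, hcard2]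
  have hds := h c hc v
  show cntDS M c v * q ^ (t + 1) = q * R
  rw [pow_succ, ← mul_assoc]
  have : cntDS M c v * q ^ (t + 1 - 1) = R := hds
  simp only [Nat.add_sub_cancel] at this
  rw [this, mul_comm]

-- ### q = 2 parity machinery

lemma fin2_dichotomy : ∀ x y : Fin 2, x = y ∨ x = y + 1 := by decide

lemma fin2_ne_add_one : ∀ x : Fin 2, x ≠ x + 1 := by decide

/-- Parity induction: if flipping any single coordinate complements a count, then
for even `t` flipping all `t + 1` coordinates complements the count as well. -/
lemma parity_flip {t : ℕ} (hte : Even t) (g : (Fin (t + 1) → Fin 2) → ℕ) (C Rr : ℕ)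
    (hpos : 0 < C)
    (hflip : ∀ w (i : Fin (t + 1)),
      (g w + g (fun s => w s + if s = i then 1 else 0)) * C = Rr)
    (w : Fin (t + 1) → Fin 2) :
    (g w + g (fun s => w s + 1)) * C = Rr := by
  set W : ℕ → (Fin (t + 1) → Fin 2) := fun k s => w s + if (s : ℕ) < k then 1 else 0 with hW
  have hstep : ∀ k (hk : k < t + 1), W (k + 1)
      = fun s => W k s + if s = (⟨k, hk⟩ : Fin (t + 1)) then 1 else 0 := by
    intro k hk
    funext s
    simp only [hW, Fin.ext_iff]
    rcases lt_trichotomy (s : ℕ) k with h1 | h1 | h1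
    · have e1 : (s : ℕ) < k + 1 := by omega
      have e2 : ¬((s : ℕ) = k) := by omega
      simp [e1, h1, e2]
    · have e1 : (s : ℕ) < k + 1 := by omega
      have e2 : ¬((s : ℕ) < k) := by omega
      simp [e1, h1, e2]
    · have e1 : ¬((s : ℕ) < k + 1) := by omega
      have e2 : ¬((s : ℕ) = k) := by omega
      have e3 : ¬((s : ℕ) < k) := by omega
      simp [e1, e2, e3]
  have main : ∀ k, k ≤ t + 1 →
      (Even k → g (W k) = g w) ∧ (¬Even k → (g w + g (W k)) * C = Rr) := by
    intro k
    induction k with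
    | zero =>
      intro _
      refine ⟨fun _ => ?_, fun h => absurd Even.zero h⟩
      congr 1
      funext s
      simp [hW]
    | succ k ih =>
      intro hk1
      obtain ⟨ihe, iho⟩ := ih (by omega)
      have hfl := hflip (W k) ⟨k, by omega⟩
      rw [← hstep k (by omega)] at hfl
      by_cases hke : Even k
      · refine ⟨fun h => absurd (Nat.even_add_one.mp h) (not_not_intro hke), fun _ => ?_⟩
        rw [← ihe hke]
        exact hfl
      · refine ⟨fun _ => ?_, fun h => absurd (Nat.even_add_one.mpr hke) h⟩
        have e1 : g w * C + g (W k) * C = Rr := by rw [← add_mul]; exact iho hke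
        have e2 : g (W k) * C + g (W (k + 1)) * C = Rr := by rw [← add_mul]; exact hfl
        have e2' : g (W (k + 1)) * C + g (W k) * C = Rr := by
          rw [add_comm]; exact e2
        have e3 : g (W (k + 1)) * C = g w * C :=
          Nat.add_right_cancel (e2'.trans e1.symm)
        exact Nat.eq_of_mul_eq_mul_right hpos e3
  have hfin : ¬Even (t + 1) := by simp [Nat.even_add_one, hte]
  have := (main (t + 1) le_rfl).2 hfin
  have hlast : W (t + 1) = fun s => w s + 1 := by
    funext s
    simp [hW, s.isLt]
  rwa [hlast] at this

/-- In a binary OA of even strength `t`, cosets on `t + 1` columns are balanced. -/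
lemma OA_coset {t : ℕ} {M : Fin R → Fin ν → Fin 2} (hte : Even t)
    (h : ∀ c : Fin t → Fin ν, Function.Injective c → ∀ v, cntOA M c v * 2 ^ t = R)
    {d : Fin (t + 1) → Fin ν} (hd : Function.Injective d) (w : Fin (t + 1) → Fin 2) :
    cntDS M d w * 2 ^ t = R := by
  classical
  have hflip : ∀ w' (i : Fin (t + 1)),
      (cntOA M d w' + cntOA M d (fun s => w' s + if s = i then 1 else 0)) * 2 ^ t = R := by
    intro w' i
    set A := univ.filter fun r : Fin R => ∀ s, M r (d s) = w' s with hA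
    set B := univ.filter fun r : Fin R =>
      ∀ s, M r (d s) = w' s + if s = i then 1 else 0 with hB
    have hdisj : Disjoint A B := by
      rw [Finset.disjoint_left]
      intro r hrA hrB
      rw [hA, mem_filter] at hrA
      rw [hB, mem_filter] at hrB
      have h1 := hrA.2 i
      have h2 := hrB.2 i
      rw [if_pos rfl] at h2
      exact fin2_ne_add_one (w' i) (h1.symm.trans h2 ▸ rfl)
    have hunion : A ∪ B = univ.filter fun r : Fin R =>
        ∀ j : Fin t, M r (d (i.succAbove j)) = w' (i.succAbove j) := by
      ext r
      simp only [hA, hB, mem_union, mem_filter, mem_univ, true_and]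
      constructor
      · rintro (hr | hr) j
        · exact hr _
        · rw [hr (i.succAbove j), if_neg (Fin.succAbove_ne i j)]
          simp
      · intro hr
        rcases fin2_dichotomy (M r (d i)) (w' i) with hi | hi
        · left
          intro s
          by_cases hs : s = i
          · subst hs; exact hi
          · obtain ⟨j, rfl⟩ := Fin.exists_succAbove_eq hs
            exact hr j
        · right
          intro s
          by_cases hs : s = i
          · subst hs; rw [if_pos rfl]; exact hi
          · rw [if_neg hs]
            obtain ⟨j, rfl⟩ := Fin.exists_succAbove_eq hs
            simpa using hr j
    have hcnt : cntOA M d w' + cntOA M d (fun s => w' s + if s = i then 1 else 0)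
        = cntOA M (d ∘ i.succAbove) (w' ∘ i.succAbove) := by
      unfold cntOA
      rw [← Finset.card_union_of_disjoint hdisj, hunion]
      rfl
    rw [hcnt]
    exact h (d ∘ i.succAbove) (hd.comp (Fin.succAbove_right_injective)) _
  have hpar := parity_flip hte (cntOA M d) (2 ^ t) R (pow_pos (by norm_num) t) hflip w
  have hsplit : cntDS M d w = cntOA M d w + cntOA M d (fun s => w s + 1) := by
    rw [cntDS_eq_sum M (by omega) d w, Fin.sum_univ_two]
    congr 2
    funext s
    simp
  rw [hsplit]
  exact hpar

lemma cntDS_shift {t : ℕ} (M : Fin R → Fin ν → Fin 2) (d : Fin t → Fin ν)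
    (w : Fin t → Fin 2) :
    cntDS M d (fun s => w s + 1) = cntDS M d w := by
  unfold cntDS
  congr 1
  ext r
  simp only [mem_filter, mem_univ, true_and]
  constructor
  · rintro ⟨a, ha⟩
    exact ⟨1 + a, fun s => by rw [ha s]; abel⟩
  · rintro ⟨a, ha⟩
    exact ⟨a - 1, fun s => by rw [ha s]; abel⟩

/-- In a binary difference scheme of even strength `t ≥ 1`, cosets on `t + 1` columns are
balanced, so the scheme actually has strength `t + 1`. -/
lemma DS_coset {t : ℕ} {M : Fin R → Fin ν → Fin 2} (hte : Even t) (ht : 0 < t)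
    (h : ∀ c : Fin t → Fin ν, Function.Injective c → ∀ v, cntDS M c v * 2 ^ (t - 1) = R)
    {d : Fin (t + 1) → Fin ν} (hd : Function.Injective d) (w : Fin (t + 1) → Fin 2) :
    cntDS M d w * 2 ^ t = R := by
  classical
  have hflip : ∀ w' (i : Fin (t + 1)),
      (cntDS M d w' + cntDS M d (fun s => w' s + if s = i then 1 else 0)) * 2 ^ (t - 1) = R := by
    intro w' i
    set A := univ.filter fun r : Fin R => ∃ a, ∀ s, M r (d s) = w' s + a with hA
    set B := univ.filter fun r : Fin R =>
      ∃ a, ∀ s, M r (d s) = (w' s + if s = i then 1 else 0) + a with hB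
    have hdisj : Disjoint A B := by
      rw [Finset.disjoint_left]
      intro r hrA hrB
      rw [hA, mem_filter] at hrA
      rw [hB, mem_filter] at hrB
      obtain ⟨a, ha⟩ := hrA.2
      obtain ⟨b, hb⟩ := hrB.2
      set s1 := i.succAbove ⟨0, ht⟩ with hs1
      have hj0 : s1 ≠ i := Fin.succAbove_ne i _
      have hab : a = b := by
        have e1 := ha s1
        have e2 := hb s1
        rw [if_neg hj0, add_zero] at e2
        exact add_left_cancel (e1.symm.trans e2)
      have e1 := ha i
      have e2 := hb i
      rw [if_pos rfl, ← hab] at e2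
      have e3 : w' i + a = w' i + 1 + a := e1.symm.trans e2
      exact fin2_ne_add_one (w' i) (add_right_cancel e3)
    have hunion : A ∪ B = univ.filter fun r : Fin R =>
        ∃ a, ∀ j : Fin t, M r (d (i.succAbove j)) = w' (i.succAbove j) + a := by
      ext r
      simp only [hA, hB, mem_union, mem_filter, mem_univ, true_and]
      constructor
      · rintro (⟨a, ha⟩ | ⟨b, hb⟩)
        · exact ⟨a, fun j => ha _⟩
        · refine ⟨b, fun j => ?_⟩
          have := hb (i.succAbove j)
          rwa [if_neg (Fin.succAbove_ne i j), add_zero] at this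
      · rintro ⟨a, ha⟩
        rcases fin2_dichotomy (M r (d i)) (w' i + a) with hi | hi
        · left
          refine ⟨a, fun s => ?_⟩
          by_cases hs : s = i
          · subst hs; exact hi
          · obtain ⟨j, rfl⟩ := Fin.exists_succAbove_eq hs
            exact ha j
        · right
          refine ⟨a, fun s => ?_⟩
          by_cases hs : s = i
          · subst hs
            rw [if_pos rfl, hi]
            abel
          · rw [if_neg hs, add_zero]
            obtain ⟨j, rfl⟩ := Fin.exists_succAbove_eq hs
            exact ha j
    have hcnt : cntDS M d w' + cntDS M d (fun s => w' s + if s = i then 1 else 0)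
        = cntDS M (d ∘ i.succAbove) (w' ∘ i.succAbove) := by
      unfold cntDS
      rw [← Finset.card_union_of_disjoint hdisj, hunion]
      rfl
    rw [hcnt]
    exact h (d ∘ i.succAbove) (hd.comp (Fin.succAbove_right_injective)) _
  have hpar := parity_flip hte (cntDS M d) (2 ^ (t - 1)) R
    (pow_pos (by norm_num) (t - 1)) hflip w
  rw [cntDS_shift, ← two_mul] at hpar
  have hpow : (2 : ℕ) ^ t = 2 ^ (t - 1) * 2 := by
    rw [← pow_succ]
    congr 1
    omega
  have hring : cntDS M d w * (2 ^ (t - 1) * 2) = 2 * cntDS M d w * 2 ^ (t - 1) := by ring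
  rw [hpow, hring]
  exact hpar

lemma fin2_move : ∀ x y z : Fin 2, x + y = z → x = z + y := by decide

lemma fin2_addadd : ∀ x y : Fin 2, x + y + y = x := by decide

/-- Normalizing a binary difference scheme of even strength by its last column. -/
lemma C4 {t ν' : ℕ} (hte : Even t) (ht : 0 < t) {M : Fin R → Fin (ν' + 1) → Fin 2}
    (h : IsDS R (ν' + 1) 2 t M) :
    IsOA R ν' 2 t (fun r j => M r j.castSucc + M r (Fin.last ν')) := by
  intro c hc v
  have hDS : ∀ c' : Fin t → Fin (ν' + 1), Function.Injective c' → ∀ v',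
      cntDS M c' v' * 2 ^ (t - 1) = R := fun c' hc' v' => isDS_inj' h hc' v'
  set d : Fin (t + 1) → Fin (ν' + 1) := Fin.snoc (fun s => (c s).castSucc) (Fin.last ν')
    with hd
  have hdinj : Function.Injective d := by
    apply snoc_inj
    · intro i j hij
      exact hc.injective (Fin.castSucc_injective _ hij)
    · intro s
      exact (Fin.castSucc_lt_last _).ne
  set w0 : Fin (t + 1) → Fin 2 := Fin.snoc v 0 with hw0
  have hcoset := DS_coset hte ht hDS hdinj w0
  have heq : (univ.filter fun r : Fin R => ∀ s, M r (c s).castSucc + M r (Fin.last ν') = v s)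
      = univ.filter fun r : Fin R => ∃ a, ∀ s, M r (d s) = w0 s + a := by
    ext r
    simp only [mem_filter, mem_univ, true_and]
    constructor
    · intro hr
      refine ⟨M r (Fin.last ν'), fun s => ?_⟩
      induction s using Fin.lastCases with
      | last =>
        rw [hd, hw0]
        simp only [Fin.snoc_last]
        rw [zero_add]
      | cast j =>
        rw [hd, hw0]
        simp only [Fin.snoc_castSucc]
        exact fin2_move _ _ _ (hr j)
    · rintro ⟨a, ha⟩ s
      have hlast := ha (Fin.last t)
      rw [hd, hw0] at hlast
      simp only [Fin.snoc_last] at hlast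
      rw [zero_add] at hlast
      have hcst := ha (Fin.castSucc s)
      rw [hd, hw0] at hcst
      simp only [Fin.snoc_castSucc] at hcst
      rw [hcst, hlast]
      exact fin2_addadd _ _
  show (univ.filter fun r : Fin R =>
      ∀ s, M r (c s).castSucc + M r (Fin.last ν') = v s).card * 2 ^ t = R
  rw [heq]
  exact hcoset

/-- Appending a zero column to a binary OA of even strength `t` yields a difference
scheme of strength `t + 1`. -/
lemma C5 {t ν' : ℕ} (hte : Even t) {M : Fin R → Fin ν' → Fin 2}
    (h : IsOA R ν' 2 t M) :
    IsDS R (ν' + 1) 2 (t + 1) (fun r => Fin.snoc (M r) 0) := by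
  intro c hc v
  have hOA : ∀ c' : Fin t → Fin ν', Function.Injective c' → ∀ v',
      cntOA M c' v' * 2 ^ t = R := fun c' hc' v' => isOA_inj' h hc' v'
  rcases snoc_cases (q := 2) (by omega) M c hc.injective v with ⟨d, hd, w, heq⟩ | ⟨c', hc', heq⟩
  · show cntDS _ c v * 2 ^ (t + 1 - 1) = R
    rw [heq]
    exact hOA d hd w
  · show cntDS _ c v * 2 ^ (t + 1 - 1) = R
    rw [heq]
    exact OA_coset hte hOA hc' v

end ChainHelpers

/-- For all integers `q ≥ 2`, `t ≥ 1` and `ν > t`: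
`E(ν,q,t) ≤ F(ν−1,q,t) ≤ F(ν,q,t+1)/q ≤ E(ν,q,t+1)` (the middle inequalities are stated
multiplied through by `q`). Moreover, when `q = 2` and `t` is even, all of these are
equalities. -/
theorem Enum_Fnum_chain (q t ν : ℕ) (hq : 2 ≤ q) (ht : 1 ≤ t) (hν : t < ν) :
    (Enum ν q t ≤ Fnum (ν - 1) q t ∧
      q * Fnum (ν - 1) q t ≤ Fnum ν q (t + 1) ∧
      Fnum ν q (t + 1) ≤ q * Enum ν q (t + 1)) ∧
    (q = 2 → Even t →
      Enum ν 2 t = Fnum (ν - 1) 2 t ∧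
        2 * Fnum (ν - 1) 2 t = Fnum ν 2 (t + 1) ∧
        Fnum ν 2 (t + 1) = 2 * Enum ν 2 (t + 1)) := by
  haveI : NeZero q := ⟨by omega⟩
  have hq0 : 0 < q := by omega
  obtain ⟨ν', rfl⟩ : ∃ ν', ν = ν' + 1 := ⟨ν - 1, by omega⟩
  have htν' : t ≤ ν' := by omega
  have hF1 : {R | 0 < R ∧ ∃ M : Fin R → Fin ν' → Fin q, IsOA R ν' q t M}.Nonempty := by
    obtain ⟨M, hM⟩ := exists_fullOA q ν' t htν'
    exact ⟨q ^ ν', pow_pos hq0 ν', M, hM⟩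
  have hF2 : {R | 0 < R ∧ ∃ M : Fin R → Fin (ν' + 1) → Fin q,
      IsOA R (ν' + 1) q (t + 1) M}.Nonempty := by
    obtain ⟨M, hM⟩ := exists_fullOA q (ν' + 1) (t + 1) (by omega)
    exact ⟨_, pow_pos hq0 _, M, hM⟩
  have hE2 : {R | 0 < R ∧ ∃ M : Fin R → Fin (ν' + 1) → Fin q,
      IsDS R (ν' + 1) q (t + 1) M}.Nonempty := by
    obtain ⟨M, hM⟩ := exists_fullOA q (ν' + 1) (t + 1) (by omega)
    exact ⟨_, pow_pos hq0 _, M, isDS_of_OA hq0 (by omega) hM⟩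
  have hE1 : {R | 0 < R ∧ ∃ M : Fin R → Fin (ν' + 1) → Fin q,
      IsDS R (ν' + 1) q t M}.Nonempty := by
    obtain ⟨M, hM⟩ := exists_fullOA q (ν' + 1) t (by omega)
    exact ⟨_, pow_pos hq0 _, M, isDS_of_OA hq0 (by omega) hM⟩
  have h1 : Enum (ν' + 1) q t ≤ Fnum ν' q t := by
    obtain ⟨hpos, M, hM⟩ := Nat.sInf_mem hF1
    exact Nat.sInf_le ⟨hpos, _, C1 hq0 (by omega) hM htν'⟩
  have h2 : q * Fnum ν' q t ≤ Fnum (ν' + 1) q (t + 1) := by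
    obtain ⟨hpos, M, hM⟩ := Nat.sInf_mem hF2
    have hstr := isOA_strength hq0 hM (by omega)
    obtain ⟨K, hKq, N, hN⟩ := C2 hq0 hstr
    have hK0 : 0 < K := by
      rcases Nat.eq_zero_or_pos K with h0 | h0
      · rw [h0, zero_mul] at hKq
        omega
      · exact h0
    have hle : Fnum ν' q t ≤ K := Nat.sInf_le ⟨hK0, N, hN⟩
    calc q * Fnum ν' q t ≤ q * K := Nat.mul_le_mul_left q hle
      _ = K * q := mul_comm q K
      _ = Fnum (ν' + 1) q (t + 1) := hKq
  have h3 : Fnum (ν' + 1) q (t + 1) ≤ q * Enum (ν' + 1) q (t + 1) := by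
    obtain ⟨hpos, M, hM⟩ := Nat.sInf_mem hE2
    exact Nat.sInf_le ⟨Nat.mul_pos hq0 hpos, _, C3 hM⟩
  refine ⟨⟨h1, h2, h3⟩, ?_⟩
  rintro rfl hte
  have ha : Fnum ν' 2 t ≤ Enum (ν' + 1) 2 t := by
    obtain ⟨hpos, M, hM⟩ := Nat.sInf_mem hE1
    exact Nat.sInf_le ⟨hpos, _, C4 hte (by omega) hM⟩
  have hb : Enum (ν' + 1) 2 (t + 1) ≤ Fnum ν' 2 t := by
    obtain ⟨hpos, M, hM⟩ := Nat.sInf_mem hF1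
    exact Nat.sInf_le ⟨hpos, _, C5 hte hM⟩
  refine ⟨le_antisymm h1 ha, le_antisymm h2 ?_, le_antisymm h3 ?_⟩
  · calc Fnum (ν' + 1) 2 (t + 1) ≤ 2 * Enum (ν' + 1) 2 (t + 1) := h3
      _ ≤ 2 * Fnum ν' 2 t := Nat.mul_le_mul_left 2 hb
  · calc 2 * Enum (ν' + 1) 2 (t + 1) ≤ 2 * Fnum ν' 2 t := Nat.mul_le_mul_left 2 hb
      _ ≤ Fnum (ν' + 1) 2 (t + 1) := h2
end

section
/- For all integers q ≥ 2 and t ≥ 1 such that t is odd or q is odd, E(t+1, q, t) = q^{t−1}; that is, the minimum number of rows of a difference scheme of strength t with t+1 columns based on (ℤ_q,+) equals q^{t−1}. -/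
open Finset
open Fin.CommRing

private lemma isUnit_of_mulEquiv {M N : Type*} [Monoid M] [Monoid N] (e : M ≃* N) {x : M}
    (h : IsUnit (e x)) : IsUnit x := by
  have := h.map e.symm.toMonoidHom
  simpa using this

private lemma isUnit_pair {M N : Type*} [Monoid M] [Monoid N] {a : M} {b : N}
    (ha : IsUnit a) (hb : IsUnit b) : IsUnit (a, b) := by
  obtain ⟨w, rfl⟩ := ha; obtain ⟨w', rfl⟩ := hb
  exact ⟨⟨(↑w, ↑w'), (↑w⁻¹, ↑w'⁻¹), by simp [Prod.ext_iff], by simp [Prod.ext_iff]⟩, rfl⟩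

private lemma crt_unit (d e m : ℕ) (hd0 : d ≠ 0) (he0 : e ≠ 0) (hm : 1 ≤ m)
    (hde : Nat.Coprime d e) (hme : Nat.Coprime m e) (h2e : ¬ 2 ∣ e)
    (hm1d : Nat.Coprime (m - 1) d) :
    ∃ u : ZMod (d * e), IsUnit u ∧ IsUnit (1 - (m : ZMod (d * e)) * u) := by
  haveI : NeZero d := ⟨hd0⟩
  haveI : NeZero e := ⟨he0⟩
  set C := ZMod.chineseRemainder hde with hC
  have hue : IsUnit ((2 * m : ℕ) : ZMod e) := by
    rw [ZMod.isUnit_iff_coprime]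
    exact Nat.Coprime.mul ((Nat.Prime.coprime_iff_not_dvd Nat.prime_two).mpr h2e) hme
  obtain ⟨w, hw⟩ := hue
  have hume : IsUnit ((m : ℕ) : ZMod e) := by
    rw [ZMod.isUnit_iff_coprime]; exact hme
  have hud : IsUnit ((m - 1 : ℕ) : ZMod d) := by
    rw [ZMod.isUnit_iff_coprime]; exact hm1d
  refine ⟨C.symm (1, ↑w⁻¹), ?_, ?_⟩
  · apply isUnit_of_mulEquiv C.toMulEquiv
    have : C.toMulEquiv (C.symm (1, ↑w⁻¹)) = (1, ↑w⁻¹) := C.apply_symm_apply _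
    rw [this]
    exact isUnit_pair isUnit_one (w⁻¹).isUnit
  · apply isUnit_of_mulEquiv C.toMulEquiv
    have hCc : C.toMulEquiv (1 - (m : ZMod (d * e)) * C.symm (1, ↑w⁻¹))
        = (1 - (m : ZMod d) * 1, 1 - (m : ZMod e) * ↑w⁻¹) := by
      show C (1 - (m : ZMod (d * e)) * C.symm (1, ↑w⁻¹)) = _
      rw [map_sub, map_one, map_mul, map_natCast, C.apply_symm_apply]
      ext <;> simp
    rw [hCc]
    apply isUnit_pair
    · have h1 : IsUnit ((m : ZMod d) - 1) := by
        rwa [← Nat.cast_one (R := ZMod d), ← Nat.cast_sub hm]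
      rw [mul_one, ← neg_sub]
      exact h1.neg
    · have hmul : (1 - (m : ZMod e) * ↑w⁻¹) * ↑w = (m : ZMod e) := by
        rw [sub_mul, one_mul, mul_assoc, Units.inv_mul, mul_one, hw]
        push_cast
        ring
      exact isUnit_of_mul_isUnit_left (hmul ▸ hume)

private lemma exists_good_unit (q m : ℕ) (hq : 0 < q) (hpar : Even m ∨ Odd q) :
    ∃ u : ZMod q, IsUnit u ∧ IsUnit (1 - (m : ZMod q) * u) := by
  rcases Nat.eq_zero_or_pos m with rfl | hm
  · exact ⟨1, isUnit_one, by simpa using isUnit_one⟩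
  have hq0 : q ≠ 0 := hq.ne'
  set d := q.gcd (m ^ q) with hd
  have hdq : d ∣ q := Nat.gcd_dvd_left _ _
  obtain ⟨e, he⟩ := hdq
  have hd0 : d ≠ 0 := by
    intro h; rw [h, zero_mul] at he; exact hq0 he
  have he0 : e ≠ 0 := by
    intro h; rw [h, mul_zero] at he; exact hq0 he
  have hdm : ∀ p : ℕ, p.Prime → p ∣ d → p ∣ m := by
    intro p pp hp
    exact pp.dvd_of_dvd_pow (hp.trans (Nat.gcd_dvd_right _ _))
  have hme : Nat.Coprime m e := by
    rw [Nat.coprime_iff_gcd_eq_one]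
    by_contra hg
    set p := (Nat.gcd m e).minFac with hp
    have pp : p.Prime := Nat.minFac_prime hg
    have hpm : p ∣ m := (Nat.minFac_dvd _).trans (Nat.gcd_dvd_left _ _)
    have hpe : p ∣ e := (Nat.minFac_dvd _).trans (Nat.gcd_dvd_right _ _)
    have h1 : p ^ (q.factorization p) ∣ m ^ q :=
      (pow_dvd_pow _ (le_of_lt (Nat.factorization_lt p hq0))).trans (pow_dvd_pow_of_dvd hpm _)
    have h2 : p ^ (q.factorization p) ∣ d := Nat.dvd_gcd (Nat.ordProj_dvd q p) h1
    have h3 : p ^ (q.factorization p + 1) ∣ q := by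
      have hde2 : p ^ (q.factorization p + 1) ∣ d * e := by
        rw [pow_succ]; exact mul_dvd_mul h2 hpe
      rwa [← he] at hde2
    exact Nat.pow_succ_factorization_not_dvd hq0 pp h3
  have hde : Nat.Coprime d e := by
    rw [Nat.coprime_iff_gcd_eq_one]
    by_contra hg
    set p := (Nat.gcd d e).minFac with hp
    have pp : p.Prime := Nat.minFac_prime hg
    have hpd : p ∣ d := (Nat.minFac_dvd _).trans (Nat.gcd_dvd_left _ _)
    have hpe : p ∣ e := (Nat.minFac_dvd _).trans (Nat.gcd_dvd_right _ _)
    have h1 : p ∣ Nat.gcd m e := Nat.dvd_gcd (hdm p pp hpd) hpe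
    rw [hme] at h1
    exact pp.ne_one (Nat.dvd_one.mp h1)
  have h2e : ¬ 2 ∣ e := by
    rcases hpar with hEm | hOq
    · intro h2
      have h2m : 2 ∣ m := hEm.two_dvd
      have : 2 ∣ Nat.gcd m e := Nat.dvd_gcd h2m h2
      rw [hme] at this
      omega
    · intro h2
      have : 2 ∣ q := by
        rw [he]; exact Dvd.dvd.mul_left h2 d
      rcases hOq with ⟨k, hk⟩
      omega
  have hm1d : Nat.Coprime (m - 1) d := by
    rw [Nat.coprime_iff_gcd_eq_one]
    by_contra hg
    set p := (Nat.gcd (m - 1) d).minFac with hp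
    have pp : p.Prime := Nat.minFac_prime hg
    have hpm1 : p ∣ m - 1 := (Nat.minFac_dvd _).trans (Nat.gcd_dvd_left _ _)
    have hpd : p ∣ d := (Nat.minFac_dvd _).trans (Nat.gcd_dvd_right _ _)
    have hpm : p ∣ m := hdm p pp hpd
    have h1 : p ∣ m - (m - 1) := Nat.dvd_sub hpm hpm1
    rw [show m - (m - 1) = 1 by omega] at h1
    exact pp.ne_one (Nat.dvd_one.mp h1)
  rw [he]
  exact crt_unit d e m hd0 he0 hm hde hme h2e hm1d

/-- The difference-scheme array: row `y ∈ (Z_q)^m`, columns `0, y₀, …, y_{m-1}, u·Σy`. -/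
private def Nmat (n m : ℕ) (u : Fin (n + 1)) (y : Fin m → Fin (n + 1)) :
    Fin (m + 2) → Fin (n + 1) :=
  Fin.cons 0 (Fin.snoc y (u * ∑ i, y i))

private lemma Nmat_zero (n m : ℕ) (u : Fin (n + 1)) (y : Fin m → Fin (n + 1)) :
    Nmat n m u y 0 = 0 := by
  simp [Nmat]

private lemma Nmat_mid (n m : ℕ) (u : Fin (n + 1)) (y : Fin m → Fin (n + 1)) (i : Fin m) :
    Nmat n m u y (Fin.succ (Fin.castSucc i)) = y i := by
  rw [Nmat, Fin.cons_succ, Fin.snoc_castSucc]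

private lemma Nmat_last (n m : ℕ) (u : Fin (n + 1)) (y : Fin m → Fin (n + 1)) :
    Nmat n m u y (Fin.succ (Fin.last m)) = u * ∑ i, y i := by
  rw [Nmat, Fin.cons_succ, Fin.snoc_last]

private lemma Nmat_sub (n m : ℕ) (u : Fin (n + 1)) (y z : Fin m → Fin (n + 1)) (j : Fin (m + 2)) :
    Nmat n m u y j - Nmat n m u z j = Nmat n m u (y - z) j := by
  induction j using Fin.cases with
  | zero => rw [Nmat_zero, Nmat_zero, Nmat_zero, sub_zero]
  | succ i =>
    induction i using Fin.lastCases with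
    | last =>
      rw [Nmat_last, Nmat_last, Nmat_last]
      simp [Pi.sub_apply, Finset.sum_sub_distrib, mul_sub]
    | cast i =>
      rw [Nmat_mid, Nmat_mid, Nmat_mid]
      simp [Pi.sub_apply]

private lemma key (n m : ℕ) (u : Fin (n + 1)) (hu : IsUnit u)
    (hu2 : IsUnit (1 - (m : Fin (n + 1)) * u))
    (γ : Fin (m + 1) → Fin (m + 2)) (hγ : StrictMono γ) (v : Fin (m + 1) → Fin (n + 1)) :
    ∃! y : Fin m → Fin (n + 1), ∃ a : Fin (n + 1), ∀ s, Nmat n m u y (γ s) = v s + a := by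
  set F : ((Fin m → Fin (n + 1)) × Fin (n + 1)) → (Fin (m + 1) → Fin (n + 1)) :=
    fun p s => Nmat n m u p.1 (γ s) - p.2 with hF
  -- one missing column
  obtain ⟨k, hk⟩ : ∃ k : Fin (m + 2), ∀ j, j ≠ k → ∃ s, γ s = j := by
    have hcard : (univ.image γ)ᶜ.card = 1 := by
      rw [Finset.card_compl, Finset.card_image_of_injective _ hγ.injective]
      simp
    obtain ⟨k, hk⟩ := Finset.card_eq_one.mp hcard
    refine ⟨k, fun j hj => ?_⟩
    have hmem : j ∈ univ.image γ := by
      by_contra hmem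
      have : j ∈ (univ.image γ)ᶜ := Finset.mem_compl.mpr hmem
      rw [hk] at this
      exact hj (Finset.mem_singleton.mp this)
    obtain ⟨s, -, hs⟩ := Finset.mem_image.mp hmem
    exact ⟨s, hs⟩
  have hinj : Function.Injective F := by
    intro p p' h
    have hEq : ∀ s, Nmat n m u (p.1 - p'.1) (γ s) = p.2 - p'.2 := by
      intro s
      rw [← Nmat_sub]
      linear_combination congrFun h s
    have h0 : ∀ j, j ≠ k → Nmat n m u (p.1 - p'.1) j = p.2 - p'.2 := by
      intro j hj
      obtain ⟨s, hs⟩ := hk j hj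
      rw [← hs]; exact hEq s
    set dd := p.1 - p'.1 with hdd
    set ee := p.2 - p'.2 with hee
    have hgoal : dd = 0 ∧ ee = 0 := by
      rcases Fin.eq_zero_or_eq_succ k with rfl | ⟨k', rfl⟩
      · -- missing column 0
        have hmid : ∀ i : Fin m, dd i = ee := by
          intro i
          have := h0 (Fin.succ (Fin.castSucc i)) (Fin.succ_ne_zero _)
          rwa [Nmat_mid] at this
        have hlast : u * ∑ i, dd i = ee := by
          have := h0 (Fin.succ (Fin.last m)) (Fin.succ_ne_zero _)
          rwa [Nmat_last] at this
        have hsum : ∑ i, dd i = (m : Fin (n + 1)) * ee := by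
          rw [Finset.sum_congr rfl (fun i _ => hmid i)]
          simp [Finset.sum_const, nsmul_eq_mul]
        have hz : (1 - (m : Fin (n + 1)) * u) * ee = 0 := by
          rw [hsum] at hlast
          linear_combination -hlast
        have heez : ee = 0 := (hu2.mul_right_eq_zero).mp hz
        exact ⟨funext fun i => by rw [Pi.zero_apply, hmid i, heez], heez⟩
      · -- missing column k'.succ
        have heez : ee = 0 := by
          have := h0 0 (Fin.succ_ne_zero k').symm
          rwa [Nmat_zero, eq_comm] at this
        refine ⟨?_, heez⟩
        rcases Fin.eq_castSucc_or_eq_last k' with ⟨i0, rfl⟩ | rfl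
        · -- missing a middle column
          have hmid : ∀ i : Fin m, i ≠ i0 → dd i = 0 := by
            intro i hi
            have hne : Fin.succ (Fin.castSucc i) ≠ Fin.succ (Fin.castSucc i0) :=
              fun h => hi (Fin.castSucc_injective _ (Fin.succ_injective _ h))
            have := h0 _ hne
            rw [heez, Nmat_mid] at this
            exact this
          have hlast : u * ∑ i, dd i = 0 := by
            have hne : Fin.succ (Fin.last m) ≠ Fin.succ (Fin.castSucc i0) :=
              fun h => (Fin.castSucc_lt_last i0).ne' (Fin.succ_injective _ h)
            have := h0 _ hne
            rw [heez, Nmat_last] at this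
            exact this
          have hsum : ∑ i, dd i = dd i0 :=
            Finset.sum_eq_single i0 (fun i _ hi => hmid i hi) (by simp)
          have hz : dd i0 = 0 := by
            rw [hsum] at hlast
            exact (hu.mul_right_eq_zero).mp hlast
          funext i
          by_cases hi : i = i0
          · rw [Pi.zero_apply, hi, hz]
          · rw [Pi.zero_apply, hmid i hi]
        · -- missing the last column
          have hmid : ∀ i : Fin m, dd i = 0 := by
            intro i
            have hne : Fin.succ (Fin.castSucc i) ≠ Fin.succ (Fin.last m) :=
              fun h => (Fin.castSucc_lt_last i).ne (Fin.succ_injective _ h)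
            have := h0 _ hne
            rw [heez, Nmat_mid] at this
            exact this
          exact funext fun i => by rw [Pi.zero_apply, hmid i]
    obtain ⟨hd1, hee1⟩ := hgoal
    have h1 : p.1 = p'.1 := sub_eq_zero.mp (by rw [← hdd] at *; exact hd1)
    have h2 : p.2 = p'.2 := sub_eq_zero.mp hee1
    exact Prod.ext h1 h2
  have hbij : Function.Bijective F := by
    rw [Fintype.bijective_iff_injective_and_card]
    refine ⟨hinj, ?_⟩
    simp [pow_succ]
  obtain ⟨p0, hp0, hp0u⟩ := hbij.existsUnique v
  refine ⟨p0.1, ⟨p0.2, fun s => ?_⟩, ?_⟩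
  · have := congrFun hp0 s
    simp only [hF] at this
    linear_combination this
  · rintro y ⟨a, ha⟩
    have : F (y, a) = v := funext fun s => by
      simp only [hF]
      linear_combination ha s
    have := hp0u (y, a) this
    rw [← this]





/-- For all integers `q ≥ 2` and `t ≥ 1` such that `t` is odd or `q` is
odd, `E(t+1, q, t) = q^(t−1)`. -/
theorem Enum_succ_eq_pow (q t : ℕ) (hq : 2 ≤ q) (ht : 1 ≤ t) (hodd : Odd t ∨ Odd q) :
    Enum (t + 1) q t = q ^ (t - 1) := by
  obtain ⟨m, rfl⟩ : ∃ m, t = m + 1 := ⟨t - 1, by omega⟩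
  obtain ⟨n, rfl⟩ : ∃ n, q = n + 1 := ⟨q - 1, by omega⟩
  have hpar : Even m ∨ Odd (n + 1) := by
    rcases hodd with h | h
    · left
      rcases h with ⟨k, hk⟩
      exact ⟨k, by omega⟩
    · right; exact h
  obtain ⟨u, hu, hu2⟩ : ∃ u : Fin (n + 1), IsUnit u ∧ IsUnit (1 - (m : Fin (n + 1)) * u) :=
    exists_good_unit (n + 1) m (by omega) hpar
  have hcardfun : Fintype.card (Fin m → Fin (n + 1)) = (n + 1) ^ (m + 1 - 1) := by simp
  set e := Fintype.equivFinOfCardEq hcardfun with he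
  set M : Fin ((n + 1) ^ (m + 1 - 1)) → Fin (m + 1 + 1) → Fin (n + 1) :=
    fun r j => Nmat n m u (e.symm r) j with hM
  have hDS : IsDS ((n + 1) ^ (m + 1 - 1)) (m + 1 + 1) (n + 1) (m + 1) M := by
    unfold IsDS
    intro γ hγ v
    obtain ⟨y0, hy0, hy0u⟩ := key n m u hu hu2 γ hγ v
    have hfil : (univ.filter fun r => ∃ a : Fin (n + 1), ∀ s, M r (γ s) = v s + a) = {e y0} := by
      ext r
      simp only [Finset.mem_filter, Finset.mem_univ, true_and, Finset.mem_singleton]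
      constructor
      · intro hr
        have h1 : e.symm r = y0 := hy0u _ hr
        rw [← h1, Equiv.apply_symm_apply]
      · rintro rfl
        simpa [hM, Equiv.symm_apply_apply] using hy0
    rw [hfil, Finset.card_singleton, one_mul]
  have hmem : (n + 1) ^ (m + 1 - 1) ∈
      {R | 0 < R ∧ ∃ M : Fin R → Fin (m + 1 + 1) → Fin (n + 1),
        IsDS R (m + 1 + 1) (n + 1) (m + 1) M} :=
    ⟨pow_pos (by omega) _, ⟨M, hDS⟩⟩
  unfold Enum
  apply le_antisymm
  · exact Nat.sInf_le hmem
  · apply le_csInf ⟨_, hmem⟩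
    rintro R ⟨hRpos, MM, hMM⟩
    have hx := hMM Fin.castSucc Fin.strictMono_castSucc (fun _ => 0)
    obtain ⟨c, hc, hcx⟩ : ∃ c, 0 < c ∧ c * (n + 1) ^ (m + 1 - 1) = R := by
      refine ⟨_, ?_, hx⟩
      rcases Nat.eq_zero_or_pos
        ((univ.filter fun r => ∃ a : Fin (n + 1), ∀ s,
          MM r (Fin.castSucc s) = (fun _ => (0 : Fin (n + 1))) s + a).card) with h0 | hpos
      · rw [h0, zero_mul] at hx; omega
      · exact hpos
    calc (n + 1) ^ (m + 1 - 1) = 1 * (n + 1) ^ (m + 1 - 1) := (one_mul _).symm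
      _ ≤ c * (n + 1) ^ (m + 1 - 1) := Nat.mul_le_mul_right _ hc
      _ = R := hcx
end
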